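/- arXiv:2506.04644 — 7 statements merged into one kernel-verified Lean document; each statement's English description precedes it below -/
import Mathlib

section
/- For the function f : ℝ → ℝ defined by f(x) = x·sin(1/x) for x ≠ 0 and f(0) = 0, the point x = 0 is a sink of f but not a local minimum of f. -/
lemma exists_small_sin (δ : ℝ) (hδ : 0 < δ) (b : ℝ) (hb : 0 < b) :
    ∃ x : ℝ, 0 < x ∧ x < δ ∧ Real.sin (1/x) = Real.sin b := by
  obtain ⟨n, hn⟩ := exists_nat_gt (1/δ)
  have hπ := Real.pi_gt_three
  have ha : 1/δ < b + n * (2*Real.pi) := by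
    have : (n:ℝ) ≤ n * (2*Real.pi) := by nlinarith [n.cast_nonneg (α := ℝ)]
    linarith
  have ha0 : 0 < b + n * (2*Real.pi) := by
    have : (0:ℝ) < 1/δ := by positivity
    linarith
  refine ⟨1/(b + n * (2*Real.pi)), by positivity, ?_, ?_⟩
  · rw [div_lt_iff₀ ha0]
    have h1 := (div_lt_iff₀ hδ).mp ha
    linarith
  · rw [one_div_one_div]
    exact Real.sin_add_nat_mul_two_pi b n

/-- points arbitrarily close to 0 with sin(1/x) = 1 -/
lemma exists_sin_one (δ : ℝ) (hδ : 0 < δ) :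
    ∃ x : ℝ, 0 < x ∧ x < δ ∧ Real.sin (1/x) = 1 := by
  obtain ⟨x, h1, h2, h3⟩ := exists_small_sin δ hδ (Real.pi/2) (by positivity)
  exact ⟨x, h1, h2, by rw [h3, Real.sin_pi_div_two]⟩

lemma exists_sin_neg_one (δ : ℝ) (hδ : 0 < δ) :
    ∃ x : ℝ, 0 < x ∧ x < δ ∧ Real.sin (1/x) = -1 := by
  have hπ := Real.pi_pos
  obtain ⟨x, h1, h2, h3⟩ := exists_small_sin δ hδ (Real.pi/2 + Real.pi) (by positivity)
  refine ⟨x, h1, h2, ?_⟩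
  rw [h3, Real.sin_add_pi, Real.sin_pi_div_two]


/-- `x` is a sink of `f`: every continuous path starting at `x` along which `f` stays
`≤ f x` makes `f` constant along the path. -/
def IsSink {X : Type*} [TopologicalSpace X] (f : X → ℝ) (x : X) : Prop :=
  ∀ γ : C(unitInterval, X), γ 0 = x → (∀ t, f (γ t) ≤ f x) →
    ∀ s t, f (γ s) = f (γ t)

/-- For `f x = x sin (1/x)` (with `f 0 = 0`), the point `0` is a sink of `f`
but not a local minimum of `f`. -/
theorem x_sin_one_over_x_sink_not_local_min :
    IsSink (fun x : ℝ => if x = 0 then 0 else x * Real.sin (1 / x)) 0 ∧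
    ¬ ∃ ε > (0:ℝ), ∀ y : ℝ, |y - 0| < ε →
        (fun x : ℝ => if x = 0 then 0 else x * Real.sin (1 / x)) 0 ≤
          (fun x : ℝ => if x = 0 then 0 else x * Real.sin (1 / x)) y := by
  set f : ℝ → ℝ := fun x : ℝ => if x = 0 then 0 else x * Real.sin (1 / x) with hf
  have hf0 : f 0 = 0 := by simp [hf]
  constructor
  · intro γ hγ0 hle s t
    have hrange : (Set.range γ).OrdConnected := by
      exact (isPreconnected_range γ.continuous).ordConnected
    have key : ∀ u, γ u = 0 := by
      intro u
      by_contra h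
      have h0mem : (0:ℝ) ∈ Set.range γ := ⟨0, hγ0⟩
      have humem : γ u ∈ Set.range γ := ⟨u, rfl⟩
      rcases lt_or_gt_of_ne h with hlt | hgt
      · -- γ u < 0 : find -x in (γ u, 0) with f(-x) > 0
        obtain ⟨x, hx1, hx2, hx3⟩ := exists_sin_one (-(γ u)) (by linarith)
        have hmem : -x ∈ Set.range γ := by
          have : -x ∈ Set.Icc (γ u) 0 := ⟨by linarith, by linarith⟩
          exact hrange.out humem h0mem this
        obtain ⟨v, hv⟩ := hmem
        have := hle v
        rw [hv, hf0] at this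
        have hne : (-x : ℝ) ≠ 0 := by linarith
        rw [hf] at this
        simp only [hne, if_false] at this
        have hsin : Real.sin (1 / (-x)) = -1 := by
          rw [div_neg, Real.sin_neg, hx3]
        nlinarith [this, hsin]
      · obtain ⟨x, hx1, hx2, hx3⟩ := exists_sin_one (γ u) hgt
        have hmem : x ∈ Set.range γ := by
          have : x ∈ Set.Icc (0:ℝ) (γ u) := ⟨le_of_lt hx1, le_of_lt hx2⟩
          exact hrange.out h0mem humem this
        obtain ⟨v, hv⟩ := hmem
        have := hle v
        rw [hv, hf0] at this
        have hne : (x : ℝ) ≠ 0 := ne_of_gt hx1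
        rw [hf] at this
        simp only [hne, if_false] at this
        nlinarith [this]
    rw [key s, key t]
  · rintro ⟨ε, hε, hmin⟩
    obtain ⟨x, hx1, hx2, hx3⟩ := exists_sin_neg_one ε hε
    have := hmin x (by rw [sub_zero, abs_of_pos hx1]; exact hx2)
    simp only [hf] at this
    have hne : x ≠ 0 := ne_of_gt hx1
    simp only [hne, if_false, if_pos rfl] at this
    rw [hx3] at this
    simp only [if_true] at this
    nlinarith
end

section
/- Let K, L ⊆ [0,1]² be closed sets with K ∪ L = [0,1]². Suppose {0} × [0,1] ⊆ K, {1} × [0,1] ⊆ K, [0,1] × {0} ⊆ L, and [0,1] × {1} ⊆ L. Then either the left edge {0} × [0,1] and the right edge {1} × [0,1] lie in the same connected component of K, or the bottom edge [0,1] × {0} and the top edge [0,1] × {1} lie in the same connected component of L. -/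
namespace DiskSep

open Set Metric


open Set Metric

/-- Separation of a compact set from a disjoint nonempty closed set. -/
lemma exists_eps_sep {X : Type*} [MetricSpace X] {A B : Set X}
    (hA : IsCompact A) (hB : IsClosed B) (hBne : B.Nonempty) (hd : Disjoint A B) :
    ∃ ε > (0:ℝ), ∀ p ∈ A, ∀ q ∈ B, ε ≤ dist p q := by
  rcases A.eq_empty_or_nonempty with rfl | hAne
  · exact ⟨1, one_pos, by simp⟩
  obtain ⟨p₀, hp₀, hmin⟩ := hA.exists_isMinOn hAne (continuous_infDist_pt B).continuousOn
  have hp₀B : p₀ ∉ B := fun h => (hd.ne_of_mem hp₀ h) rfl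
  have hpos : 0 < infDist p₀ B := (hB.notMem_iff_infDist_pos hBne).1 hp₀B
  refine ⟨infDist p₀ B, hpos, fun p hp q hq => ?_⟩
  exact le_trans (hmin hp) (infDist_le_dist_of_mem hq)

/-- If two subsets of a compact set cannot be joined by a connected subset, the compact
set splits into two disjoint compact pieces containing them respectively. -/
lemma exists_compact_split {X : Type*} [TopologicalSpace X] [T2Space X]
    {K W E : Set X} (hKc : IsCompact K) (hWK : W ⊆ K) (hEK : E ⊆ K)
    (hEc : IsClosed E) (hWconn : IsPreconnected W) (hEconn : IsPreconnected E)
    {x₀ : X} (hx₀ : x₀ ∈ W)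
    (hsep : ∀ T, T ⊆ K → IsConnected T → W ⊆ T → E ⊆ T → False) :
    ∃ A B : Set X, IsCompact A ∧ IsCompact B ∧ Disjoint A B ∧ A ∪ B = K ∧ W ⊆ A ∧ E ⊆ B := by
  have hx₀K : x₀ ∈ K := hWK hx₀
  set Γ := connectedComponentIn K x₀ with hΓ
  have hWΓ : W ⊆ Γ := hWconn.subset_connectedComponentIn hx₀ hWK
  have hΓconn : IsConnected Γ := (isConnected_connectedComponentIn_iff).2 hx₀K
  have hΓE : Γ ∩ E = ∅ := by
    by_contra h
    obtain ⟨z, hzΓ, hzE⟩ := nonempty_iff_ne_empty.2 h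
    refine hsep (Γ ∪ E) (union_subset (connectedComponentIn_subset K x₀) hEK)
      (hΓconn.union ⟨z, hzΓ, hzE⟩ ⟨⟨z, hzE⟩, hEconn⟩) (hWΓ.trans subset_union_left)
      subset_union_right
  -- pass to the subtype
  haveI : CompactSpace ↥K := isCompact_iff_compactSpace.mp hKc
  set x₀' : ↥K := ⟨x₀, hx₀K⟩ with hx₀'
  have hΓim : Γ = Subtype.val '' connectedComponent x₀' := connectedComponentIn_eq_image hx₀K
  set E' : Set ↥K := Subtype.val ⁻¹' E with hE'
  have hE'c : IsClosed E' := hEc.preimage continuous_subtype_val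
  have hE'comp : IsCompact E' := hE'c.isCompact
  have hinter : E' ∩ ⋂ s : { s : Set ↥K // IsClopen s ∧ x₀' ∈ s }, ↑s = ∅ := by
    rw [← connectedComponent_eq_iInter_isClopen x₀']
    ext y
    simp only [mem_inter_iff, mem_empty_iff_false, iff_false, not_and]
    intro hyE hyC
    have : (y : X) ∈ Γ ∩ E := ⟨by rw [hΓim]; exact ⟨y, hyC, rfl⟩, hyE⟩
    rw [hΓE] at this; exact this
  obtain ⟨u, hu⟩ := hE'comp.elim_finite_subfamily_closed
    (fun s : { s : Set ↥K // IsClopen s ∧ x₀' ∈ s } => (s : Set ↥K))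
    (fun s => s.2.1.1) hinter
  set A' : Set ↥K := ⋂ i ∈ u, (i : Set ↥K) with hA'
  have hA'clopen : IsClopen A' := isClopen_biInter_finset fun i _ => i.2.1
  have hcompA' : connectedComponent x₀' ⊆ A' := by
    refine subset_iInter₂ fun i _ => ?_
    exact i.2.1.connectedComponent_subset i.2.2
  refine ⟨Subtype.val '' A', Subtype.val '' A'ᶜ,
    (hA'clopen.isClosed.isCompact).image continuous_subtype_val,
    (hA'clopen.compl.isClosed.isCompact).image continuous_subtype_val, ?_, ?_, ?_, ?_⟩
  · exact disjoint_compl_right.image Subtype.val_injective.injOn (subset_univ _) (subset_univ _)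
  · rw [← image_union, union_compl_self, image_univ, Subtype.range_coe]
  · exact hWΓ.trans (by rw [hΓim]; exact image_mono hcompA')
  · intro e he
    have heK : e ∈ K := hEK he
    refine ⟨⟨e, heK⟩, ?_, rfl⟩
    intro hmem
    have : (⟨e, heK⟩ : ↥K) ∈ E' ∩ ⋂ i ∈ u, (i : Set ↥K) := ⟨he, hmem⟩
    rw [hu] at this; exact this



/-- Lift of an increment in `ZMod 4` to an integer in `{-1,0,1}` (junk value `2` at `2`). -/
def liftZ : ZMod 4 → ℤ := fun x => if x = 1 then 1 else if x = 3 then -1 else if x = 0 then 0 else 2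

lemma liftZ_cast : ∀ d : ZMod 4, d ≠ 2 → ((liftZ d : ℤ) : ZMod 4) = d := by decide

lemma liftZ_bound : ∀ d : ZMod 4, d ≠ 2 → -1 ≤ liftZ d ∧ liftZ d ≤ 1 := by decide

lemma liftZ_neg : ∀ d : ZMod 4, d ≠ 2 → liftZ (-d) = - liftZ d := by decide

lemma liftZ_zero : liftZ 0 = 0 := by decide

lemma cell_sum : ∀ a b c d : ZMod 4, b - a ≠ 2 → c - b ≠ 2 → d - c ≠ 2 → a - d ≠ 2 →
    c - a ≠ 2 → liftZ (b-a) + liftZ (c-b) + liftZ (d-c) + liftZ (a-d) = 0 := by decide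

/-- The discrete winding-number contradiction on an `n × n` grid. -/
theorem grid_false (n : ℕ) (hn : 0 < n) (f : ℕ → ℕ → ZMod 4)
    (hleft : ∀ j, j ≤ n → f 0 j = 0)
    (hright : ∀ j, j ≤ n → f n j = 2)
    (hbot : ∀ i, i ≤ n → f i 0 ≠ 3)
    (htop : ∀ i, i ≤ n → f i n ≠ 1)
    (hadj : ∀ i j i' j', i ≤ n → j ≤ n → i' ≤ n → j' ≤ n →
      i' ≤ i + 1 → i ≤ i' + 1 → j' ≤ j + 1 → j ≤ j' + 1 → f i' j' - f i j ≠ 2) : False := by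
  set R : ℕ → ℤ := fun j => ∑ i ∈ Finset.range n, liftZ (f (i+1) j - f i j) with hR
  -- Row sums are constant.
  have key : ∀ j, j < n → R (j+1) = R j := by
    intro j hj
    set V : ℕ → ℤ := fun i => liftZ (f i (j+1) - f i j) with hV
    have hcell : ∀ i ∈ Finset.range n,
        liftZ (f (i+1) (j+1) - f i (j+1)) =
          liftZ (f (i+1) j - f i j) + (V (i+1) - V i) := by
      intro i hi
      rw [Finset.mem_range] at hi
      have h1 : f (i+1) j - f i j ≠ 2 :=
        hadj i j (i+1) j (by omega) (by omega) (by omega) (by omega) (by omega) (by omega) (by omega) (by omega)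
      have h2 : f (i+1) (j+1) - f (i+1) j ≠ 2 :=
        hadj (i+1) j (i+1) (j+1) (by omega) (by omega) (by omega) (by omega) (by omega) (by omega) (by omega) (by omega)
      have hs : f (i+1) (j+1) - f i (j+1) ≠ 2 :=
        hadj i (j+1) (i+1) (j+1) (by omega) (by omega) (by omega) (by omega) (by omega) (by omega) (by omega) (by omega)
      have hv : f i (j+1) - f i j ≠ 2 :=
        hadj i j i (j+1) (by omega) (by omega) (by omega) (by omega) (by omega) (by omega) (by omega) (by omega)
      have h5 : f (i+1) (j+1) - f i j ≠ 2 :=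
        hadj i j (i+1) (j+1) (by omega) (by omega) (by omega) (by omega) (by omega) (by omega) (by omega) (by omega)
      have h3 : f i (j+1) - f (i+1) (j+1) ≠ 2 := by
        intro h; apply hs
        have : f (i+1) (j+1) - f i (j+1) = -(f i (j+1) - f (i+1) (j+1)) := by ring
        rw [this, h]; decide
      have h4 : f i j - f i (j+1) ≠ 2 := by
        intro h; apply hv
        have : f i (j+1) - f i j = -(f i j - f i (j+1)) := by ring
        rw [this, h]; decide
      have hsum := cell_sum (f i j) (f (i+1) j) (f (i+1) (j+1)) (f i (j+1)) h1 h2 h3 h4 h5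
      have e3 : liftZ (f i (j+1) - f (i+1) (j+1)) = - liftZ (f (i+1) (j+1) - f i (j+1)) := by
        rw [show f i (j+1) - f (i+1) (j+1) = -(f (i+1) (j+1) - f i (j+1)) by ring]
        exact liftZ_neg _ hs
      have e4 : liftZ (f i j - f i (j+1)) = - liftZ (f i (j+1) - f i j) := by
        rw [show f i j - f i (j+1) = -(f i (j+1) - f i j) by ring]
        exact liftZ_neg _ hv
      rw [e3, e4] at hsum
      simp only [hV]
      linarith
    have hVn : V n = 0 := by
      show liftZ (f n (j+1) - f n j) = 0
      rw [hright (j+1) (by omega), hright j (by omega)]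
      simp [liftZ_zero]
    have hV0 : V 0 = 0 := by
      show liftZ (f 0 (j+1) - f 0 j) = 0
      rw [hleft (j+1) (by omega), hleft j (by omega)]
      simp [liftZ_zero]
    calc R (j+1) = ∑ i ∈ Finset.range n, liftZ (f (i+1) (j+1) - f i (j+1)) := rfl
      _ = ∑ i ∈ Finset.range n, (liftZ (f (i+1) j - f i j) + (V (i+1) - V i)) :=
          Finset.sum_congr rfl hcell
      _ = R j + (V n - V 0) := by
          rw [Finset.sum_add_distrib, Finset.sum_range_sub]
      _ = R j := by rw [hVn, hV0]; ring
  have hconst : ∀ j, j ≤ n → R j = R 0 := by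
    intro j hj
    induction j with
    | zero => rfl
    | succ k ih => rw [key k (by omega), ih (by omega)]
  -- Bottom row: R 0 = 2.
  have hbotsum : R 0 = 2 := by
    set P : ℕ → ℤ := fun i => ∑ k ∈ Finset.range i, liftZ (f (k+1) 0 - f k 0) with hP
    have hPmain : ∀ i, i ≤ n → ((P i : ZMod 4) = f i 0 ∧ 0 ≤ P i ∧ P i ≤ 2) := by
      intro i hi
      induction i with
      | zero =>
        refine ⟨?_, le_refl _, by norm_num⟩
        simp [hP, hleft 0 (by omega)]
      | succ k ih =>
        obtain ⟨ihc, ih0, ih2⟩ := ih (by omega)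
        have hd : f (k+1) 0 - f k 0 ≠ 2 :=
          hadj k 0 (k+1) 0 (by omega) (by omega) (by omega) (by omega) (by omega) (by omega) (by omega) (by omega)
        have hPs : P (k+1) = P k + liftZ (f (k+1) 0 - f k 0) := Finset.sum_range_succ _ _
        have hcast : ((P (k+1) : ℤ) : ZMod 4) = f (k+1) 0 := by
          rw [hPs]; push_cast
          rw [ihc, liftZ_cast _ hd]; ring
        obtain ⟨hb1, hb2⟩ := liftZ_bound _ hd
        refine ⟨hcast, ?_, ?_⟩
        · by_contra h
          have hP1 : P (k+1) = -1 := by omega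
          apply hbot (k+1) (by omega)
          rw [← hcast, hP1]; decide
        · by_contra h
          have hP3 : P (k+1) = 3 := by omega
          apply hbot (k+1) (by omega)
          rw [← hcast, hP3]; decide
    obtain ⟨hc, h0, h2⟩ := hPmain n (le_refl n)
    have hRP : R 0 = P n := rfl
    rw [hright 0 (by omega)] at hc
    rw [hRP]
    rcases (by omega : P n = 0 ∨ P n = 1 ∨ P n = 2) with h | h | h
    · rw [h] at hc; exact absurd hc (by decide)
    · rw [h] at hc; exact absurd hc (by decide)
    · omega
  -- Top row: R n = -2.
  have htopsum : R n = -2 := by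
    set P : ℕ → ℤ := fun i => ∑ k ∈ Finset.range i, liftZ (f (k+1) n - f k n) with hP
    have hPmain : ∀ i, i ≤ n → ((P i : ZMod 4) = f i n ∧ -2 ≤ P i ∧ P i ≤ 0) := by
      intro i hi
      induction i with
      | zero =>
        refine ⟨?_, by norm_num, le_refl _⟩
        simp [hP, hleft n (le_refl n)]
      | succ k ih =>
        obtain ⟨ihc, ih0, ih2⟩ := ih (by omega)
        have hd : f (k+1) n - f k n ≠ 2 :=
          hadj k n (k+1) n (by omega) (by omega) (by omega) (by omega) (by omega) (by omega) (by omega) (by omega)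
        have hPs : P (k+1) = P k + liftZ (f (k+1) n - f k n) := Finset.sum_range_succ _ _
        have hcast : ((P (k+1) : ℤ) : ZMod 4) = f (k+1) n := by
          rw [hPs]; push_cast
          rw [ihc, liftZ_cast _ hd]; ring
        obtain ⟨hb1, hb2⟩ := liftZ_bound _ hd
        refine ⟨hcast, ?_, ?_⟩
        · by_contra h
          have hP1 : P (k+1) = -3 := by omega
          apply htop (k+1) (by omega)
          rw [← hcast, hP1]; decide
        · by_contra h
          have hP3 : P (k+1) = 1 := by omega
          apply htop (k+1) (by omega)
          rw [← hcast, hP3]; decide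
    obtain ⟨hc, h0, h2⟩ := hPmain n (le_refl n)
    have hRP : R n = P n := rfl
    rw [hright n (le_refl n)] at hc
    rw [hRP]
    rcases (by omega : P n = 0 ∨ P n = -1 ∨ P n = -2) with h | h | h
    · rw [h] at hc; exact absurd hc (by decide)
    · rw [h] at hc; exact absurd hc (by decide)
    · omega
  have := hconst n (le_refl n)
  omega


end DiskSep

/-- Disk separation lemma (unit square case): if the square is covered by two closed
sets `K` and `L`, `K` containing the two vertical edges and `L` the two horizontal
edges, then either the two vertical edges lie in the same connected component of `K`,
or the two horizontal edges lie in the same connected component of `L`. -/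
theorem disk_separation_square (K L : Set (ℝ × ℝ))
    (hKsub : K ⊆ Set.Icc (0:ℝ) 1 ×ˢ Set.Icc (0:ℝ) 1)
    (hLsub : L ⊆ Set.Icc (0:ℝ) 1 ×ˢ Set.Icc (0:ℝ) 1)
    (hK : IsClosed K) (hL : IsClosed L)
    (hcover : K ∪ L = Set.Icc (0:ℝ) 1 ×ˢ Set.Icc (0:ℝ) 1)
    (hW : ({0} : Set ℝ) ×ˢ Set.Icc (0:ℝ) 1 ⊆ K)
    (hE : ({1} : Set ℝ) ×ˢ Set.Icc (0:ℝ) 1 ⊆ K)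
    (hS : Set.Icc (0:ℝ) 1 ×ˢ ({0} : Set ℝ) ⊆ L)
    (hN : Set.Icc (0:ℝ) 1 ×ˢ ({1} : Set ℝ) ⊆ L) :
    (∃ T ⊆ K, IsConnected T ∧
      ({0} : Set ℝ) ×ˢ Set.Icc (0:ℝ) 1 ⊆ T ∧ ({1} : Set ℝ) ×ˢ Set.Icc (0:ℝ) 1 ⊆ T) ∨
    (∃ T ⊆ L, IsConnected T ∧
      Set.Icc (0:ℝ) 1 ×ˢ ({0} : Set ℝ) ⊆ T ∧ Set.Icc (0:ℝ) 1 ×ˢ ({1} : Set ℝ) ⊆ T) := by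
  classical
  by_contra hcon
  push_neg at hcon
  obtain ⟨h1, h2⟩ := hcon
  set Q : Set (ℝ × ℝ) := Set.Icc (0:ℝ) 1 ×ˢ Set.Icc (0:ℝ) 1 with hQ
  have hQcomp : IsCompact Q := isCompact_Icc.prod isCompact_Icc
  have hIcc01 : IsConnected (Set.Icc (0:ℝ) 1) := ⟨Set.nonempty_Icc.2 zero_le_one, isPreconnected_Icc⟩
  have hKc : IsCompact K := hQcomp.of_isClosed_subset hK hKsub
  have hLc : IsCompact L := hQcomp.of_isClosed_subset hL hLsub
  -- edges
  have hWconn : IsConnected (({0} : Set ℝ) ×ˢ Set.Icc (0:ℝ) 1) :=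
    isConnected_singleton.prod hIcc01
  have hEconn : IsConnected (({1} : Set ℝ) ×ˢ Set.Icc (0:ℝ) 1) :=
    isConnected_singleton.prod hIcc01
  have hSconn : IsConnected (Set.Icc (0:ℝ) 1 ×ˢ ({0} : Set ℝ)) :=
    hIcc01.prod isConnected_singleton
  have hNconn : IsConnected (Set.Icc (0:ℝ) 1 ×ˢ ({1} : Set ℝ)) :=
    hIcc01.prod isConnected_singleton
  have hEclosed : IsClosed (({1} : Set ℝ) ×ˢ Set.Icc (0:ℝ) 1) :=
    (isClosed_singleton).prod isClosed_Icc
  have hNclosed : IsClosed (Set.Icc (0:ℝ) 1 ×ˢ ({1} : Set ℝ)) :=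
    isClosed_Icc.prod isClosed_singleton
  have hx₀W : ((0:ℝ), (0:ℝ)) ∈ ({0} : Set ℝ) ×ˢ Set.Icc (0:ℝ) 1 :=
    Set.mem_prod.2 ⟨rfl, ⟨le_refl 0, zero_le_one⟩⟩
  have hx₀S : ((0:ℝ), (0:ℝ)) ∈ Set.Icc (0:ℝ) 1 ×ˢ ({0} : Set ℝ) :=
    Set.mem_prod.2 ⟨⟨le_refl 0, zero_le_one⟩, rfl⟩
  obtain ⟨A, B, hAc, hBc, hAB, hABK, hWA, hEB⟩ :=
    DiskSep.exists_compact_split hKc hW hE hEclosed hWconn.isPreconnected hEconn.isPreconnected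
      hx₀W (fun T hTK hTc hWT hET => h1 T hTK hTc hWT hET)
  obtain ⟨C, D, hCc, hDc, hCD, hCDL, hSC, hND⟩ :=
    DiskSep.exists_compact_split hLc hS hN hNclosed hSconn.isPreconnected hNconn.isPreconnected
      hx₀S (fun T hTL hTc hST hNT => h2 T hTL hTc hST hNT)
  -- positive separation
  obtain ⟨ε₁, hε₁, hsep₁⟩ := DiskSep.exists_eps_sep hAc hBc.isClosed
    ⟨((1:ℝ),(0:ℝ)), hEB (Set.mem_prod.2 ⟨rfl, ⟨le_refl 0, zero_le_one⟩⟩)⟩ hAB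
  obtain ⟨ε₂, hε₂, hsep₂⟩ := DiskSep.exists_eps_sep hCc hDc.isClosed
    ⟨((0:ℝ),(1:ℝ)), hND (Set.mem_prod.2 ⟨⟨le_refl 0, zero_le_one⟩, rfl⟩)⟩ hCD
  set ε : ℝ := min ε₁ ε₂ with hε
  have hεpos : 0 < ε := lt_min hε₁ hε₂
  obtain ⟨m, hm⟩ := exists_nat_one_div_lt hεpos
  set N : ℕ := m + 1 with hNdef
  have hN0 : 0 < N := Nat.succ_pos m
  have hNR : (0:ℝ) < N := by exact_mod_cast hN0
  have hNlt : (1:ℝ) / N < ε := by exact_mod_cast hm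
  set v : ℕ → ℕ → ℝ × ℝ := fun i j => ((i:ℝ)/N, (j:ℝ)/N) with hv
  have hIcc : ∀ i, i ≤ N → (i:ℝ)/N ∈ Set.Icc (0:ℝ) 1 := by
    intro i hi
    constructor
    · positivity
    · rw [div_le_one hNR]; exact_mod_cast hi
  have hvQ : ∀ i j, i ≤ N → j ≤ N → v i j ∈ K ∪ L := by
    intro i j hi hj
    rw [hcover]
    exact Set.mem_prod.2 ⟨hIcc i hi, hIcc j hj⟩
  set f : ℕ → ℕ → ZMod 4 := fun i j =>
    if v i j ∈ A then 0 else if v i j ∈ B then 2 else if v i j ∈ C then 1 else 3 with hf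
  -- label inversion
  have hf0 : ∀ i j, f i j = 0 → v i j ∈ A := by
    intro i j h
    simp only [hf] at h
    split_ifs at h with ha hb hc
    · exact ha
    all_goals exact absurd h (by decide)
  have hf2 : ∀ i j, f i j = 2 → v i j ∈ B := by
    intro i j h
    simp only [hf] at h
    split_ifs at h with ha hb hc
    · exact absurd h (by decide)
    · exact hb
    all_goals exact absurd h (by decide)
  have hf1 : ∀ i j, f i j = 1 → v i j ∈ C := by
    intro i j h
    simp only [hf] at h
    split_ifs at h with ha hb hc
    · exact absurd h (by decide)
    · exact absurd h (by decide)
    · exact hc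
    · exact absurd h (by decide)
  have hf3 : ∀ i j, i ≤ N → j ≤ N → f i j = 3 → v i j ∈ D := by
    intro i j hi hj h
    simp only [hf] at h
    split_ifs at h with ha hb hc
    · exact absurd h (by decide)
    · exact absurd h (by decide)
    · exact absurd h (by decide)
    · rcases hvQ i j hi hj with hk | hl
      · rw [← hABK] at hk
        exact absurd (hk.resolve_left ha) hb
      · rw [← hCDL] at hl
        exact (hl.resolve_left hc)
  -- boundary conditions
  have hleft : ∀ j, j ≤ N → f 0 j = 0 := by
    intro j hj
    have : v 0 j ∈ ({0} : Set ℝ) ×ˢ Set.Icc (0:ℝ) 1 := by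
      refine Set.mem_prod.2 ⟨?_, hIcc j hj⟩
      simp [hv]
    simp only [hf, if_pos (hWA this)]
  have hright : ∀ j, j ≤ N → f N j = 2 := by
    intro j hj
    have hmem : v N j ∈ ({1} : Set ℝ) ×ˢ Set.Icc (0:ℝ) 1 := by
      refine Set.mem_prod.2 ⟨?_, hIcc j hj⟩
      simp only [hv]
      exact div_self (ne_of_gt hNR)
    have hB' : v N j ∈ B := hEB hmem
    have hA' : v N j ∉ A := fun h => hAB.ne_of_mem h hB' rfl
    simp only [hf, if_neg hA', if_pos hB']
  have hbot : ∀ i, i ≤ N → f i 0 ≠ 3 := by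
    intro i hi
    have hmem : v i 0 ∈ Set.Icc (0:ℝ) 1 ×ˢ ({0} : Set ℝ) := by
      refine Set.mem_prod.2 ⟨hIcc i hi, ?_⟩
      simp [hv]
    have hC' : v i 0 ∈ C := hSC hmem
    simp only [hf]
    split_ifs with ha hb <;> decide
  have htop : ∀ i, i ≤ N → f i N ≠ 1 := by
    intro i hi
    have hmem : v i N ∈ Set.Icc (0:ℝ) 1 ×ˢ ({1} : Set ℝ) := by
      refine Set.mem_prod.2 ⟨hIcc i hi, ?_⟩
      simp only [hv]
      exact div_self (ne_of_gt hNR)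
    have hD' : v i N ∈ D := hND hmem
    have hC' : v i N ∉ C := fun h => hCD.ne_of_mem h hD' rfl
    simp only [hf]
    split_ifs with ha hb <;> decide
  -- adjacency
  have habs : ∀ a b : ℕ, a ≤ b + 1 → b ≤ a + 1 → |(a:ℝ)/N - (b:ℝ)/N| ≤ 1/N := by
    intro a b hab hba
    have c1 : (a:ℝ) ≤ (b:ℝ) + 1 := by exact_mod_cast hab
    have c2 : (b:ℝ) ≤ (a:ℝ) + 1 := by exact_mod_cast hba
    have h3 : |(a:ℝ) - b| ≤ 1 := abs_sub_le_iff.2 ⟨by linarith, by linarith⟩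
    rw [div_sub_div_same, abs_div, abs_of_pos hNR]
    gcongr
  have hdist : ∀ i j i' j', i' ≤ i + 1 → i ≤ i' + 1 → j' ≤ j + 1 → j ≤ j' + 1 →
      dist (v i j) (v i' j') < ε := by
    intro i j i' j' a1 a2 a3 a4
    rw [Prod.dist_eq]
    apply max_lt
    · calc dist ((i:ℝ)/N) ((i':ℝ)/N) = |(i:ℝ)/N - (i':ℝ)/N| := Real.dist_eq _ _
        _ ≤ 1/N := habs i i' a2 a1
        _ < ε := hNlt
    · calc dist ((j:ℝ)/N) ((j':ℝ)/N) = |(j:ℝ)/N - (j':ℝ)/N| := Real.dist_eq _ _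
        _ ≤ 1/N := habs j j' a4 a3
        _ < ε := hNlt
  have hadj : ∀ i j i' j', i ≤ N → j ≤ N → i' ≤ N → j' ≤ N →
      i' ≤ i + 1 → i ≤ i' + 1 → j' ≤ j + 1 → j ≤ j' + 1 → f i' j' - f i j ≠ 2 := by
    intro i j i' j' hi hj hi' hj' a1 a2 a3 a4 hdiff
    have hd : dist (v i j) (v i' j') < ε := hdist i j i' j' a1 a2 a3 a4
    have heq : f i' j' = 2 + f i j := by
      rw [← hdiff]; ring
    rcases (by decide : ∀ x : ZMod 4, x = 0 ∨ x = 1 ∨ x = 2 ∨ x = 3) (f i j) with h | h | h | h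
    · have h2' : f i' j' = 2 := by rw [heq, h]; decide
      have := hsep₁ _ (hf0 i j h) _ (hf2 i' j' h2')
      have hεle : ε ≤ ε₁ := min_le_left _ _
      linarith
    · have h2' : f i' j' = 3 := by rw [heq, h]; decide
      have := hsep₂ _ (hf1 i j h) _ (hf3 i' j' hi' hj' h2')
      have hεle : ε ≤ ε₂ := min_le_right _ _
      linarith
    · have h2' : f i' j' = 0 := by rw [heq, h]; decide
      have := hsep₁ _ (hf0 i' j' h2') _ (hf2 i j h)
      have hεle : ε ≤ ε₁ := min_le_left _ _
      rw [dist_comm] at hd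
      linarith
    · have h2' : f i' j' = 1 := by rw [heq, h]; decide
      have := hsep₂ _ (hf1 i' j' h2') _ (hf3 i j hi hj h)
      have hεle : ε ≤ ε₂ := min_le_right _ _
      rw [dist_comm] at hd
      linarith
  exact DiskSep.grid_false N hN0 f hleft hright hbot htop hadj
end

section
/- Let K, L ⊆ [0,1]² be closed sets with K ∪ L = [0,1]², W = {0}×[0,1] ⊆ K, E = {1}×[0,1] ⊆ K, S = [0,1]×{0} ⊆ L, N = [0,1]×{1} ⊆ L. Suppose W and E lie in different connected components of K and S and N lie in different connected components of L. Then there exists a continuous map f : [0,1]² → [0,1]² without a fixed point — a contradiction; hence no such configuration exists. -/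
namespace NDSC

/-- `allowed a b` : the labels `a b : Fin 4` (thought of as directions E,N,W,S)
are not opposite. -/
def allowed (a b : Fin 4) : Prop := a - b ≠ 2

instance : ∀ a b, Decidable (allowed a b) := fun a b => by unfold allowed; infer_instance

/-- signed quarter-turn from `a` to `b`. -/
def w (a b : Fin 4) : ℤ := if b - a = 1 then 1 else if b - a = 3 then -1 else 0

/-- lift of `x` relative to the forbidden direction `v`. -/
def rep (v x : Fin 4) : ℤ := ((x - v : Fin 4) : ℤ)

lemma cell : ∀ a b c d : Fin 4, allowed a b → allowed b d →
    allowed a c → allowed c d → allowed a d →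
    w a b + w b d = w a c + w c d := by decide

lemma step : ∀ v a b : Fin 4, a ≠ v → b ≠ v → allowed a b →
    w a b = rep v b - rep v a := by decide

lemma corner : ∀ a b c d : Fin 4, a ≠ 0 → a ≠ 1 → b ≠ 2 → b ≠ 1 →
    c ≠ 0 → c ≠ 3 → d ≠ 2 → d ≠ 3 →
    (rep 3 d - rep 3 c) - (rep 1 b - rep 1 a) ≠
      (rep 2 d - rep 2 b) - (rep 0 c - rep 0 a) := by decide

lemma discrete (n : ℕ) (ℓ : ℕ → ℕ → Fin 4)
    (hH : ∀ i j, i < n → j ≤ n → allowed (ℓ i j) (ℓ (i+1) j))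
    (hV : ∀ i j, i ≤ n → j < n → allowed (ℓ i j) (ℓ i (j+1)))
    (hD : ∀ i j, i < n → j < n → allowed (ℓ i j) (ℓ (i+1) (j+1)))
    (hL : ∀ j, j ≤ n → ℓ 0 j ≠ 0) (hR : ∀ j, j ≤ n → ℓ n j ≠ 2)
    (hB : ∀ i, i ≤ n → ℓ i 0 ≠ 1) (hT : ∀ i, i ≤ n → ℓ i n ≠ 3) : False := by
  set S : ℕ → ℤ := fun j => ∑ i ∈ Finset.range n, w (ℓ i j) (ℓ (i+1) j) with hS
  -- row step
  have key1 : ∀ j, j < n → S (j+1) - S j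
      = w (ℓ n j) (ℓ n (j+1)) - w (ℓ 0 j) (ℓ 0 (j+1)) := by
    intro j hj
    have : S (j+1) - S j
        = ∑ i ∈ Finset.range n,
            (w (ℓ (i+1) j) (ℓ (i+1) (j+1)) - w (ℓ i j) (ℓ i (j+1))) := by
      rw [hS, ← Finset.sum_sub_distrib]
      apply Finset.sum_congr rfl
      intro i hi
      have hi' := Finset.mem_range.mp hi
      have hcell := cell (ℓ i j) (ℓ (i+1) j) (ℓ i (j+1)) (ℓ (i+1) (j+1))
        (hH i j hi' (le_of_lt hj)) (hV (i+1) j hi' (by omega))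
        (hV i j (le_of_lt hi') (by omega)) (hH i (j+1) hi' (by omega))
        (hD i j hi' hj)
      linarith
    rw [this, Finset.sum_range_sub (fun i => w (ℓ i j) (ℓ i (j+1)))]
  have key2 : S n - S 0 = ∑ j ∈ Finset.range n,
      (w (ℓ n j) (ℓ n (j+1)) - w (ℓ 0 j) (ℓ 0 (j+1))) := by
    rw [← Finset.sum_range_sub S]
    exact Finset.sum_congr rfl fun j hj => key1 j (Finset.mem_range.mp hj)
  -- evaluate the four sides via lifts
  have hright : ∑ j ∈ Finset.range n, w (ℓ n j) (ℓ n (j+1))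
      = rep 2 (ℓ n n) - rep 2 (ℓ n 0) := by
    rw [← Finset.sum_range_sub (fun j => rep 2 (ℓ n j))]
    exact Finset.sum_congr rfl fun j hj => by
      have hj' := Finset.mem_range.mp hj
      exact step 2 (ℓ n j) (ℓ n (j+1)) (hR j (le_of_lt hj')) (hR (j+1) hj')
        (hV n j le_rfl hj')
  have hleft : ∑ j ∈ Finset.range n, w (ℓ 0 j) (ℓ 0 (j+1))
      = rep 0 (ℓ 0 n) - rep 0 (ℓ 0 0) := by
    rw [← Finset.sum_range_sub (fun j => rep 0 (ℓ 0 j))]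
    exact Finset.sum_congr rfl fun j hj => by
      have hj' := Finset.mem_range.mp hj
      exact step 0 (ℓ 0 j) (ℓ 0 (j+1)) (hL j (le_of_lt hj')) (hL (j+1) hj')
        (hV 0 j (by omega) hj')
  have hbot : S 0 = rep 1 (ℓ n 0) - rep 1 (ℓ 0 0) := by
    rw [hS, ← Finset.sum_range_sub (fun i => rep 1 (ℓ i 0))]
    exact Finset.sum_congr rfl fun i hi => by
      have hi' := Finset.mem_range.mp hi
      exact step 1 (ℓ i 0) (ℓ (i+1) 0) (hB i (le_of_lt hi')) (hB (i+1) hi')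
        (hH i 0 hi' (by omega))
  have htop : S n = rep 3 (ℓ n n) - rep 3 (ℓ 0 n) := by
    rw [hS, ← Finset.sum_range_sub (fun i => rep 3 (ℓ i n))]
    exact Finset.sum_congr rfl fun i hi => by
      have hi' := Finset.mem_range.mp hi
      exact step 3 (ℓ i n) (ℓ (i+1) n) (hT i (le_of_lt hi')) (hT (i+1) hi')
        (hH i n hi' le_rfl)
  rw [Finset.sum_sub_distrib, hright, hleft, htop, hbot] at key2
  exact corner (ℓ 0 0) (ℓ n 0) (ℓ 0 n) (ℓ n n)
    (hL 0 (by omega)) (hB 0 (by omega)) (hR 0 (by omega)) (hB n le_rfl)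
    (hL n le_rfl) (hT 0 (by omega)) (hR n le_rfl) (hT n le_rfl)
    (by linarith)

open Set

lemma separation {A : Set (ℝ × ℝ)} (hA : IsCompact A) {P Q : Set (ℝ × ℝ)}
    (hP : P ⊆ A) (hQ : Q ⊆ A) (hPc : IsPreconnected P) (hQc : IsPreconnected Q)
    {x y : ℝ × ℝ} (hx : x ∈ P) (hy : y ∈ Q)
    (hsep : ¬ ∃ T ⊆ A, IsConnected T ∧ P ⊆ T ∧ Q ⊆ T) :
    ∃ A₁ A₂ : Set (ℝ × ℝ), IsCompact A₁ ∧ IsCompact A₂ ∧ A₁ ∪ A₂ = A ∧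
      Disjoint A₁ A₂ ∧ P ⊆ A₁ ∧ Q ⊆ A₂ := by
  haveI : CompactSpace A := isCompact_iff_compactSpace.mp hA
  set x' : A := ⟨x, hP hx⟩
  set y' : A := ⟨y, hQ hy⟩
  have hy' : y' ∉ connectedComponent x' := by
    intro hmem
    apply hsep
    have hCc : IsConnected (Subtype.val '' connectedComponent x' : Set (ℝ × ℝ)) :=
      isConnected_connectedComponent.image _ continuous_subtype_val.continuousOn
    set C : Set (ℝ × ℝ) := Subtype.val '' connectedComponent x' with hCdef
    have hxC : x ∈ C := ⟨x', mem_connectedComponent, rfl⟩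
    have hyC : y ∈ C := ⟨y', hmem, rfl⟩
    have h1 : IsConnected (C ∪ P) := hCc.union ⟨x, hxC, hx⟩ ⟨⟨x, hx⟩, hPc⟩
    have h2 : IsConnected ((C ∪ P) ∪ Q) :=
      h1.union ⟨y, Or.inl hyC, hy⟩ ⟨⟨y, hy⟩, hQc⟩
    refine ⟨(C ∪ P) ∪ Q, ?_, h2, fun p hp => Or.inl (Or.inr hp), fun q hq => Or.inr hq⟩
    rintro p ((hp | hp) | hp)
    · obtain ⟨p', -, rfl⟩ := hp
      exact p'.2
    · exact hP hp
    · exact hQ hp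
  rw [connectedComponent_eq_iInter_isClopen x'] at hy'
  simp only [mem_iInter, not_forall] at hy'
  obtain ⟨⟨Z, hZclopen, hxZ⟩, hyZ⟩ := hy'
  set A₁ : Set (ℝ × ℝ) := Subtype.val '' Z with hA₁def
  set A₂ : Set (ℝ × ℝ) := Subtype.val '' Zᶜ with hA₂def
  have hA₁c : IsCompact A₁ := (hZclopen.isClosed.isCompact).image continuous_subtype_val
  have hA₂c : IsCompact A₂ := (hZclopen.compl.isClosed.isCompact).image continuous_subtype_val
  have hunion : A₁ ∪ A₂ = A := by
    rw [hA₁def, hA₂def, ← image_union, union_compl_self, Subtype.coe_image_univ]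
  have hdisj : Disjoint A₁ A₂ := (disjoint_compl_right (a := Z)).image
      Subtype.val_injective.injOn (subset_univ _) (subset_univ _)
  obtain ⟨U, V, hUo, hVo, hA₁U, hA₂V, hUV⟩ :=
    SeparatedNhds.of_isCompact_isCompact hA₁c hA₂c hdisj
  have main : ∀ R : Set (ℝ × ℝ), IsPreconnected R → R ⊆ A →
      ∀ r ∈ R, r ∈ A₁ → R ⊆ A₁ := by
    intro R hRc hRA r hr hrA₁
    intro p hp
    have hpA : p ∈ A₁ ∪ A₂ := hunion ▸ hRA hp
    rcases hpA with h | h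
    · exact h
    · exfalso
      have hcov : R ⊆ U ∪ V := fun q hq => by
        have : q ∈ A₁ ∪ A₂ := hunion ▸ hRA hq
        rcases this with h' | h'
        · exact Or.inl (hA₁U h')
        · exact Or.inr (hA₂V h')
      obtain ⟨z, hzR, hzU, hzV⟩ := hRc U V hUo hVo hcov
        ⟨r, hr, hA₁U hrA₁⟩ ⟨p, hp, hA₂V h⟩
      exact hUV.ne_of_mem hzU hzV rfl
  have main' : ∀ R : Set (ℝ × ℝ), IsPreconnected R → R ⊆ A →
      ∀ r ∈ R, r ∈ A₂ → R ⊆ A₂ := by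
    intro R hRc hRA r hr hrA₂ p hp
    have hpA : p ∈ A₁ ∪ A₂ := hunion ▸ hRA hp
    rcases hpA with h | h
    · exfalso
      have hcov : R ⊆ U ∪ V := fun q hq => by
        have : q ∈ A₁ ∪ A₂ := hunion ▸ hRA hq
        rcases this with h' | h'
        · exact Or.inl (hA₁U h')
        · exact Or.inr (hA₂V h')
      obtain ⟨z, hzR, hzU, hzV⟩ := hRc U V hUo hVo hcov
        ⟨p, hp, hA₁U h⟩ ⟨r, hr, hA₂V hrA₂⟩
      exact hUV.ne_of_mem hzU hzV rfl
    · exact h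
  exact ⟨A₁, A₂, hA₁c, hA₂c, hunion, hdisj,
    main P hPc hP x hx ⟨x', hxZ, rfl⟩,
    main' Q hQc hQ y hy ⟨y', hyZ, rfl⟩⟩

open Set

lemma eps {A₁ A₂ : Set (ℝ × ℝ)} (h₁ : IsCompact A₁) (h₂ : IsCompact A₂)
    (hne₁ : A₁.Nonempty) (hne₂ : A₂.Nonempty) (hd : Disjoint A₁ A₂) :
    ∃ ε > (0:ℝ), ∀ p ∈ A₁, ∀ q ∈ A₂, ε ≤ dist p q := by
  obtain ⟨z₀, hz₀, hmin⟩ := (h₁.prod h₂).exists_isMinOn (hne₁.prod hne₂)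
    (continuous_fst.dist continuous_snd).continuousOn
  refine ⟨dist z₀.1 z₀.2, ?_, ?_⟩
  · exact dist_pos.mpr fun h => hd.ne_of_mem hz₀.1 hz₀.2 h
  · intro p hp q hq
    exact hmin (Set.mk_mem_prod hp hq)

end NDSC


/-- If the unit square is covered by closed sets `K` (containing both vertical edges)
and `L` (containing both horizontal edges), it is impossible that the vertical edges
lie in different connected components of `K` while the horizontal edges lie in
different connected components of `L`: such a configuration would give a continuous
self-map of the square without fixed points, contradicting Brouwer's theorem. -/
theorem no_doubly_separated_cover (K L : Set (ℝ × ℝ))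
    (hKsub : K ⊆ Set.Icc (0:ℝ) 1 ×ˢ Set.Icc (0:ℝ) 1)
    (hLsub : L ⊆ Set.Icc (0:ℝ) 1 ×ˢ Set.Icc (0:ℝ) 1)
    (hK : IsClosed K) (hL : IsClosed L)
    (hcover : K ∪ L = Set.Icc (0:ℝ) 1 ×ˢ Set.Icc (0:ℝ) 1)
    (hW : ({0} : Set ℝ) ×ˢ Set.Icc (0:ℝ) 1 ⊆ K)
    (hE : ({1} : Set ℝ) ×ˢ Set.Icc (0:ℝ) 1 ⊆ K)
    (hS : Set.Icc (0:ℝ) 1 ×ˢ ({0} : Set ℝ) ⊆ L)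
    (hN : Set.Icc (0:ℝ) 1 ×ˢ ({1} : Set ℝ) ⊆ L)
    (hKsep : ¬ ∃ T ⊆ K, IsConnected T ∧
      ({0} : Set ℝ) ×ˢ Set.Icc (0:ℝ) 1 ⊆ T ∧ ({1} : Set ℝ) ×ˢ Set.Icc (0:ℝ) 1 ⊆ T)
    (hLsep : ¬ ∃ T ⊆ L, IsConnected T ∧
      Set.Icc (0:ℝ) 1 ×ˢ ({0} : Set ℝ) ⊆ T ∧ Set.Icc (0:ℝ) 1 ×ˢ ({1} : Set ℝ) ⊆ T) :
    False := by
  classical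
  have hQcomp : IsCompact (Set.Icc (0:ℝ) 1 ×ˢ Set.Icc (0:ℝ) 1) :=
    isCompact_Icc.prod isCompact_Icc
  have hKcomp : IsCompact K := hQcomp.of_isClosed_subset hK hKsub
  have hLcomp : IsCompact L := hQcomp.of_isClosed_subset hL hLsub
  have h00W : ((0:ℝ), (0:ℝ)) ∈ ({0} : Set ℝ) ×ˢ Set.Icc (0:ℝ) 1 := ⟨rfl, by norm_num⟩
  have h10E : ((1:ℝ), (0:ℝ)) ∈ ({1} : Set ℝ) ×ˢ Set.Icc (0:ℝ) 1 := ⟨rfl, by norm_num⟩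
  have h00S : ((0:ℝ), (0:ℝ)) ∈ Set.Icc (0:ℝ) 1 ×ˢ ({0} : Set ℝ) := ⟨by norm_num, rfl⟩
  have h01N : ((0:ℝ), (1:ℝ)) ∈ Set.Icc (0:ℝ) 1 ×ˢ ({1} : Set ℝ) := ⟨by norm_num, rfl⟩
  obtain ⟨K₁, K₂, hK₁c, hK₂c, hKun, hKd, hWK₁, hEK₂⟩ :=
    NDSC.separation hKcomp hW hE (isPreconnected_singleton.prod isPreconnected_Icc)
      (isPreconnected_singleton.prod isPreconnected_Icc) h00W h10E hKsep
  obtain ⟨L₁, L₂, hL₁c, hL₂c, hLun, hLd, hSL₁, hNL₂⟩ :=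
    NDSC.separation hLcomp hS hN (isPreconnected_Icc.prod isPreconnected_singleton)
      (isPreconnected_Icc.prod isPreconnected_singleton) h00S h01N hLsep
  obtain ⟨ε₁, hε₁, hdist₁⟩ := NDSC.eps hK₁c hK₂c ⟨_, hWK₁ h00W⟩ ⟨_, hEK₂ h10E⟩ hKd
  obtain ⟨ε₂, hε₂, hdist₂⟩ := NDSC.eps hL₁c hL₂c ⟨_, hSL₁ h00S⟩ ⟨_, hNL₂ h01N⟩ hLd
  obtain ⟨m, hm⟩ := exists_nat_one_div_lt (lt_min hε₁ hε₂)
  set n : ℕ := m + 1 with hn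
  have npos : (0:ℝ) < (n:ℝ) := by positivity
  have hmesh : 1 / (n:ℝ) < min ε₁ ε₂ := by
    have : ((n:ℕ):ℝ) = (m:ℝ) + 1 := by push_cast [hn]; ring
    rw [this]; exact hm
  set g : ℕ → ℕ → ℝ × ℝ := fun i j => ((i:ℝ)/(n:ℝ), (j:ℝ)/(n:ℝ)) with hg
  have hcoord : ∀ i : ℕ, i ≤ n → (i:ℝ)/(n:ℝ) ∈ Set.Icc (0:ℝ) 1 := fun i hi =>
    ⟨by positivity, (div_le_one npos).mpr (by exact_mod_cast hi)⟩
  have hgQ : ∀ i j : ℕ, i ≤ n → j ≤ n →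
      g i j ∈ Set.Icc (0:ℝ) 1 ×ˢ Set.Icc (0:ℝ) 1 :=
    fun i j hi hj => ⟨hcoord i hi, hcoord j hj⟩
  set ℓ : ℕ → ℕ → Fin 4 := fun i j =>
    if g i j ∈ K₁ then 2 else if g i j ∈ K₂ then 0 else
      if g i j ∈ L₁ then 3 else 1 with hℓ
  have hlab : ∀ i j : ℕ, i ≤ n → j ≤ n →
      (ℓ i j = 2 ∧ g i j ∈ K₁) ∨ (ℓ i j = 0 ∧ g i j ∈ K₂) ∨
      (ℓ i j = 3 ∧ g i j ∈ L₁) ∨ (ℓ i j = 1 ∧ g i j ∈ L₂) := by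
    intro i j hi hj
    have hmem : g i j ∈ K ∪ L := by rw [hcover]; exact hgQ i j hi hj
    by_cases h1 : g i j ∈ K₁
    · exact Or.inl ⟨by simp [hℓ, h1], h1⟩
    by_cases h2 : g i j ∈ K₂
    · exact Or.inr (Or.inl ⟨by simp [hℓ, h1, h2], h2⟩)
    by_cases h3 : g i j ∈ L₁
    · exact Or.inr (Or.inr (Or.inl ⟨by simp [hℓ, h1, h2, h3], h3⟩))
    · refine Or.inr (Or.inr (Or.inr ⟨by simp [hℓ, h1, h2, h3], ?_⟩))
      rcases hmem with h | h
      · rw [← hKun] at h; rcases h with h | h <;> [exact absurd h h1; exact absurd h h2]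
      · rw [← hLun] at h; rcases h with h | h
        · exact absurd h h3
        · exact h
  have getK₁ : ∀ i j : ℕ, i ≤ n → j ≤ n → ℓ i j = 2 → g i j ∈ K₁ := by
    intro i j hi hj e
    rcases hlab i j hi hj with ⟨h, hm'⟩ | ⟨h, hm'⟩ | ⟨h, hm'⟩ | ⟨h, hm'⟩ <;>
      first | exact hm' | (rw [e] at h; exact absurd h (by decide))
  have getK₂ : ∀ i j : ℕ, i ≤ n → j ≤ n → ℓ i j = 0 → g i j ∈ K₂ := by
    intro i j hi hj e
    rcases hlab i j hi hj with ⟨h, hm'⟩ | ⟨h, hm'⟩ | ⟨h, hm'⟩ | ⟨h, hm'⟩ <;>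
      first | (rw [e] at h; exact absurd h (by decide)) | exact hm'
  have getL₁ : ∀ i j : ℕ, i ≤ n → j ≤ n → ℓ i j = 3 → g i j ∈ L₁ := by
    intro i j hi hj e
    rcases hlab i j hi hj with ⟨h, hm'⟩ | ⟨h, hm'⟩ | ⟨h, hm'⟩ | ⟨h, hm'⟩ <;>
      first | (rw [e] at h; exact absurd h (by decide)) | exact hm'
  have getL₂ : ∀ i j : ℕ, i ≤ n → j ≤ n → ℓ i j = 1 → g i j ∈ L₂ := by
    intro i j hi hj e
    rcases hlab i j hi hj with ⟨h, hm'⟩ | ⟨h, hm'⟩ | ⟨h, hm'⟩ | ⟨h, hm'⟩ <;>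
      first | (rw [e] at h; exact absurd h (by decide)) | exact hm'
  have hdistle : ∀ i j i' j' : ℕ, i ≤ i' → i' ≤ i + 1 → j ≤ j' → j' ≤ j + 1 →
      dist (g i j) (g i' j') ≤ 1 / (n:ℝ) := by
    intro i j i' j' h1 h2 h3 h4
    have key : ∀ a b : ℕ, a ≤ b → b ≤ a + 1 →
        dist ((a:ℝ)/(n:ℝ)) ((b:ℝ)/(n:ℝ)) ≤ 1/(n:ℝ) := by
      intro a b ha hb
      rw [Real.dist_eq, div_sub_div_same, abs_div, abs_of_nonneg npos.le, abs_sub_comm,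
        abs_of_nonneg (sub_nonneg.mpr (by exact_mod_cast ha))]
      gcongr
      have : (b:ℝ) ≤ (a:ℝ) + 1 := by exact_mod_cast hb
      linarith
    rw [hg, Prod.dist_eq]
    exact max_le (key i i' h1 h2) (key j j' h3 h4)
  have hnotallowed : ∀ a b : Fin 4, ¬ NDSC.allowed a b →
      (a = 2 ∧ b = 0) ∨ (a = 0 ∧ b = 2) ∨ (a = 3 ∧ b = 1) ∨ (a = 1 ∧ b = 3) := by
    decide
  have hadj : ∀ i j i' j' : ℕ, i ≤ n → j ≤ n → i' ≤ n → j' ≤ n →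
      i ≤ i' → i' ≤ i + 1 → j ≤ j' → j' ≤ j + 1 → NDSC.allowed (ℓ i j) (ℓ i' j') := by
    intro i j i' j' hi hj hi' hj' a1 a2 a3 a4
    by_contra hna
    have hdlt : dist (g i j) (g i' j') < min ε₁ ε₂ :=
      lt_of_le_of_lt (hdistle i j i' j' a1 a2 a3 a4) hmesh
    have hm1 := min_le_left ε₁ ε₂
    have hm2 := min_le_right ε₁ ε₂
    rcases hnotallowed _ _ hna with ⟨e1, e2⟩ | ⟨e1, e2⟩ | ⟨e1, e2⟩ | ⟨e1, e2⟩
    · have := hdist₁ _ (getK₁ i j hi hj e1) _ (getK₂ i' j' hi' hj' e2)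
      linarith
    · have := hdist₁ _ (getK₁ i' j' hi' hj' e2) _ (getK₂ i j hi hj e1)
      rw [dist_comm] at this; linarith
    · have := hdist₂ _ (getL₁ i j hi hj e1) _ (getL₂ i' j' hi' hj' e2)
      linarith
    · have := hdist₂ _ (getL₁ i' j' hi' hj' e2) _ (getL₂ i j hi hj e1)
      rw [dist_comm] at this; linarith
  have hgW : ∀ j : ℕ, j ≤ n → g 0 j ∈ K₁ := fun j hj =>
    hWK₁ ⟨by simp [hg], hcoord j hj⟩
  have hgE : ∀ j : ℕ, j ≤ n → g n j ∈ K₂ := fun j hj =>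
    hEK₂ ⟨by simp [hg, div_self npos.ne'], hcoord j hj⟩
  have hgS : ∀ i : ℕ, i ≤ n → g i 0 ∈ L₁ := fun i hi =>
    hSL₁ ⟨hcoord i hi, by simp [hg]⟩
  have hgN : ∀ i : ℕ, i ≤ n → g i n ∈ L₂ := fun i hi =>
    hNL₂ ⟨hcoord i hi, by simp [hg, div_self npos.ne']⟩
  refine NDSC.discrete n ℓ
    (fun i j hi hj => hadj i j (i+1) j (by omega) hj (by omega) hj (by omega)
      (by omega) le_rfl (by omega))
    (fun i j hi hj => hadj i j i (j+1) hi (by omega) hi (by omega)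
      le_rfl (by omega) (by omega) (by omega))
    (fun i j hi hj => hadj i j (i+1) (j+1) (by omega) (by omega) (by omega) (by omega)
      (by omega) (by omega) (by omega) (by omega))
    (fun j hj e => Set.disjoint_left.mp hKd (hgW j hj) (getK₂ 0 j (by omega) hj e))
    (fun j hj e => Set.disjoint_left.mp hKd (getK₁ n j le_rfl hj e) (hgE j hj))
    (fun i hi e => Set.disjoint_left.mp hLd (hgS i hi) (getL₂ i 0 hi (by omega) e))
    (fun i hi e => Set.disjoint_left.mp hLd (getL₁ i n hi le_rfl e) (hgN i hi))
end

section
/- Let D₁, D₂ ⊆ ℝ² be open disks with radii r₁, r₂ ∈ [1/2, 1] and centers z₁, z₂ with ‖z₁ − z₂‖ < 1/2. Let a, b ∈ ℝ² \ (D₁ ∪ D₂) with ‖a − b‖ < 1/2, and let m ∈ D₁ ∩ D₂ be not collinear with a and b. Then there exists a rectifiable curve C from a to b avoiding D₁ ∪ D₂ with length(C) ≤ arcsin(2‖a − b‖) − ‖a − b‖. -/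
open Metric

open Real Set
open scoped RealInnerProductSpace ENNReal

set_option maxHeartbeats 1000000

namespace AvoidTwoDisks

noncomputable def Jrot (x : EuclideanSpace ℝ (Fin 2)) : EuclideanSpace ℝ (Fin 2) :=
  (WithLp.equiv 2 (Fin 2 → ℝ)).symm ![-(x 1), x 0]

@[simp] lemma Jrot_apply (x : EuclideanSpace ℝ (Fin 2)) (i : Fin 2) :
    Jrot x i = ![-(x 1), x 0] i := by
  simp [Jrot]

lemma lagrangeJ (x y : EuclideanSpace ℝ (Fin 2)) :
    ⟪y, x⟫^2 + ⟪y, Jrot x⟫^2 = ‖y‖^2 * ‖x‖^2 := by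
  rw [← real_inner_self_eq_norm_sq, ← real_inner_self_eq_norm_sq]
  simp only [PiLp.inner_apply, RCLike.inner_apply, Fin.sum_univ_two, conj_trivial, Jrot_apply]
  simp only [Matrix.cons_val_zero, Matrix.cons_val_one, Matrix.head_cons]
  ring

lemma jorth (x : EuclideanSpace ℝ (Fin 2)) : ⟪x, Jrot x⟫ = 0 := by
  simp only [PiLp.inner_apply, RCLike.inner_apply, Fin.sum_univ_two, conj_trivial, Jrot_apply]
  simp only [Matrix.cons_val_zero, Matrix.cons_val_one, Matrix.head_cons]
  ring

lemma jnorm (x : EuclideanSpace ℝ (Fin 2)) : ‖Jrot x‖ = ‖x‖ := by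
  have h := real_inner_self_eq_norm_sq (Jrot x)
  have h2 : ⟪Jrot x, Jrot x⟫ = ⟪x, x⟫ := by
    simp only [PiLp.inner_apply, RCLike.inner_apply, Fin.sum_univ_two, conj_trivial, Jrot_apply]
    simp only [Matrix.cons_val_zero, Matrix.cons_val_one, Matrix.head_cons]
    ring
  rw [h2, real_inner_self_eq_norm_sq] at h
  nlinarith [norm_nonneg (Jrot x), norm_nonneg x]

lemma le_of_sq_le_sq₂ {x y : ℝ} (hy : 0 ≤ y) (h : x^2 ≤ y^2) (hx : 0 ≤ x) : x ≤ y := by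
  by_contra hcon
  push_neg at hcon
  nlinarith [mul_pos (by linarith : (0:ℝ) < x - y) (by linarith : (0:ℝ) < x + y)]

lemma tent_eq (t : ℝ) : 1 - |2*t-1| = 2 * min t (1-t) := by
  rcases le_total t (1/2) with h | h
  · rw [abs_of_nonpos (by linarith), min_eq_left (by linarith)]; ring
  · rw [abs_of_nonneg (by linarith), min_eq_right (by linarith)]; ring

/-! ### Scalar lemmas -/

lemma scalA {d r P R t₁ : ℝ} (ht₁ : t₁ ∈ Set.Icc (0:ℝ) 1)
    (hA : r^2*d^2 ≤ P^2 + R^2) (hB : r^2*d^2 ≤ (P+d^2)^2 + R^2)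
    (hE : (P+t₁*d^2)^2 + R^2 < r^2*d^2) :
    P ≤ 0 ∧ 0 ≤ P + d^2 ∧ r^2*d^2 - d^4/4 ≤ R^2 := by
  obtain ⟨ht0, ht1⟩ := ht₁
  have hP : P ≤ 0 := by
    by_contra h
    push_neg at h
    have h1 : P ≤ P + t₁*d^2 := by nlinarith
    have h2 : P^2 ≤ (P+t₁*d^2)^2 := by nlinarith
    linarith
  have hPd : 0 ≤ P + d^2 := by
    by_contra h
    push_neg at h
    have h1 : P + t₁*d^2 ≤ P + d^2 := by nlinarith
    have h2 : (P+d^2)^2 ≤ (P+t₁*d^2)^2 := by nlinarith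
    linarith
  refine ⟨hP, hPd, ?_⟩
  have hpos : 0 < r^2*d^2 - R^2 := by nlinarith [sq_nonneg (P+t₁*d^2)]
  obtain ⟨c, hc0, hc2⟩ : ∃ c, 0 ≤ c ∧ c^2 = r^2*d^2 - R^2 :=
    ⟨Real.sqrt (r^2*d^2 - R^2), Real.sqrt_nonneg _, Real.sq_sqrt hpos.le⟩
  have h1 : c ≤ -P := by nlinarith [sq_nonneg (c + P)]
  have h2 : c ≤ P + d^2 := by nlinarith [sq_nonneg (c - (P + d^2))]
  nlinarith

lemma scalPsi {d r P R t : ℝ} (hd : 0 < d)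
    (hP : P ≤ 0) (hPd : 0 ≤ P + d^2)
    (hA : r^2*d^2 ≤ P^2 + R^2) (hB : r^2*d^2 ≤ (P+d^2)^2 + R^2)
    (ht0 : 0 ≤ t) (ht1 : t ≤ 1) :
    r^2*d^2 - R^2 - (P+t*d^2)^2 ≤ min t (1-t) * d^4 := by
  have hM0 : 0 ≤ min t (1-t) := le_min ht0 (by linarith)
  rcases le_or_gt (r^2*d^2 - R^2) 0 with h | h
  · nlinarith [sq_nonneg (P+t*d^2), mul_nonneg hM0 (pow_pos hd 4).le]
  obtain ⟨c, hc0, hc2⟩ : ∃ c, 0 ≤ c ∧ c^2 = r^2*d^2 - R^2 :=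
    ⟨Real.sqrt (r^2*d^2 - R^2), Real.sqrt_nonneg _, Real.sq_sqrt h.le⟩
  have h1 : c ≤ -P := by nlinarith [sq_nonneg (c + P)]
  have h2 : c ≤ P + d^2 := by nlinarith [sq_nonneg (c - (P + d^2))]
  have hcd : 2*c ≤ d^2 := by linarith
  rcases le_total t (1/2) with htm | htm
  · have hMt : min t (1-t) = t := min_eq_left (by linarith)
    rw [hMt]
    have key : c^2 - (P+t*d^2)^2 ≤ t * d^4 := by
      rcases le_or_gt c (t*d^2) with hcase | hcase
      · have e1 : c*c ≤ c*(t*d^2) := mul_le_mul_of_nonneg_left hcase hc0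
        have e2 : c*(t*d^2) ≤ (d^2/2)*(t*d^2) :=
          mul_le_mul_of_nonneg_right (by linarith) (mul_nonneg ht0 (sq_nonneg d))
        nlinarith [sq_nonneg (P+t*d^2)]
      · have hneg : 0 ≤ c - t*d^2 := by linarith
        have hsq : (c - t*d^2)^2 ≤ (P + t*d^2)^2 := by
          have h3 : c - t*d^2 ≤ -(P + t*d^2) := by linarith
          calc (c - t*d^2)^2 ≤ (-(P + t*d^2))^2 := pow_le_pow_left₀ hneg h3 2
          _ = (P + t*d^2)^2 := by ring
        have e3 : 0 ≤ (t*d^2)*(d^2 - 2*c + t*d^2) :=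
          mul_nonneg (mul_nonneg ht0 (sq_nonneg d))
            (by linarith [mul_nonneg ht0 (sq_nonneg d)])
        nlinarith
    linarith [hc2 ▸ key]
  · have hMt : min t (1-t) = 1 - t := min_eq_right (by linarith)
    rw [hMt]
    have hu0 : (0:ℝ) ≤ 1 - t := by linarith
    have key : c^2 - (P+t*d^2)^2 ≤ (1-t) * d^4 := by
      rcases le_or_gt c ((1-t)*d^2) with hcase | hcase
      · have e1 : c*c ≤ c*((1-t)*d^2) := mul_le_mul_of_nonneg_left hcase hc0
        have e2 : c*((1-t)*d^2) ≤ (d^2/2)*((1-t)*d^2) :=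
          mul_le_mul_of_nonneg_right (by linarith) (mul_nonneg hu0 (sq_nonneg d))
        nlinarith [sq_nonneg (P+t*d^2)]
      · have hneg : 0 ≤ c - (1-t)*d^2 := by linarith
        have hsq : (c - (1-t)*d^2)^2 ≤ (P + t*d^2)^2 := by
          have h3 : c - (1-t)*d^2 ≤ P + t*d^2 := by linarith
          exact pow_le_pow_left₀ hneg h3 2
        have e3 : 0 ≤ ((1-t)*d^2)*(d^2 - 2*c + (1-t)*d^2) :=
          mul_nonneg (mul_nonneg hu0 (sq_nonneg d))
            (by linarith [mul_nonneg hu0 (sq_nonneg d)])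
        nlinarith
    linarith [hc2 ▸ key]

lemma scalEnter {d r s h P R t : ℝ} (hd : 0 < d) (hr : 1/2 ≤ r)
    (hs0 : 0 < s) (hs2 : s^2 = 1 - d^2) (hh : h = d^2/(2*s))
    (hP : P ≤ 0) (hPd : 0 ≤ P + d^2) (hR0 : 0 ≤ R) (hRbig : r^2*d^2 - d^4/4 ≤ R^2)
    (hA : r^2*d^2 ≤ P^2 + R^2) (hB : r^2*d^2 ≤ (P+d^2)^2 + R^2)
    (ht0 : 0 ≤ t) (ht1 : t ≤ 1) :
    r^2*d^2 ≤ (P + t*d^2)^2 + (R + 2*h*(min t (1-t))*d)^2 := by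
  have hM0 : 0 ≤ min t (1-t) := le_min ht0 (by linarith)
  have hpsi := scalPsi hd hP hPd hA hB ht0 ht1
  have hRds : d*s/2 ≤ R := by
    have hr2 : 1/4 ≤ r^2 := by nlinarith
    have hd4 : d^2/4 ≤ r^2*d^2 := by nlinarith [sq_nonneg d]
    have h1 : (d*s/2)^2 ≤ R^2 := by
      have : (d*s/2)^2 = d^2*s^2/4 := by ring
      rw [this, hs2]; nlinarith
    nlinarith [sq_nonneg (R - d*s/2), sq_nonneg (R + d*s/2), mul_pos hd hs0]
  have hhR : d^3/4 ≤ h*R := by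
    have e0 : h*(d*s/2) ≤ h*R := by
      apply mul_le_mul_of_nonneg_left hRds
      rw [hh]; positivity
    calc d^3/4 = (d^2/(2*s))*(d*s/2) := by field_simp; ring
    _ = h*(d*s/2) := by rw [hh]
    _ ≤ h*R := e0
  have hterm : min t (1-t) * d^4 ≤ 4*h*(min t (1-t))*d*R := by
    have e0 := mul_le_mul_of_nonneg_left hhR (by positivity : (0:ℝ) ≤ 4*(min t (1-t))*d)
    calc min t (1-t) * d^4 = (4*(min t (1-t))*d)*(d^3/4) := by ring
    _ ≤ (4*(min t (1-t))*d)*(h*R) := e0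
    _ = 4*h*(min t (1-t))*d*R := by ring
  nlinarith [sq_nonneg (2*h*(min t (1-t))*d)]

lemma scalFar {d r h P R : ℝ} (hh0 : 0 ≤ h) (hd : 0 < d) (hR0 : 0 ≤ R) {t : ℝ}
    (ht0 : 0 ≤ t) (ht1 : t ≤ 1)
    (hall : r^2*d^2 ≤ (P + t*d^2)^2 + R^2) :
    r^2*d^2 ≤ (P + t*d^2)^2 + (R + 2*h*(min t (1-t))*d)^2 := by
  have hM0 : 0 ≤ min t (1-t) := le_min ht0 (by linarith)
  nlinarith [mul_nonneg (mul_nonneg (mul_nonneg (by linarith : (0:ℝ) ≤ 2*h) hM0) hd.le) hR0,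
    sq_nonneg (2*h*(min t (1-t))*d)]

private lemma finstep {A Q X y S T : ℝ} (h1 : (A + y)^2 ≤ S) (h2 : 2*(X*Q) ≤ 2*(A*y))
    (hT : A^2 + Q^2 = T) : T ≤ S + (X - Q)^2 := by nlinarith [sq_nonneg X, sq_nonneg y]

lemma scalNear {d r s h P R : ℝ} (hd : 0 < d) (hd2 : d < 1/2) (hr : 1/2 ≤ r)
    (hs0 : 0 < s) (hs2 : s^2 = 1 - d^2) (hh : h = d^2/(2*s))
    (hRneg : R < 0) (hRsmall : -R < d*(1-s)/2)
    (hall : ∀ t ∈ Set.Icc (0:ℝ) 1, r^2*d^2 ≤ (P+t*d^2)^2 + R^2) :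
    ∀ t ∈ Set.Icc (0:ℝ) 1,
      r^2*d^2 ≤ (P + t*d^2)^2 + (R + 2*h*(min t (1-t))*d)^2 := by
  obtain ⟨Q, hQdef⟩ : ∃ Q : ℝ, Q = -R := ⟨-R, rfl⟩
  have hQ0 : 0 < Q := by rw [hQdef]; linarith
  have hQsmall : Q < d*(1-s)/2 := by rw [hQdef]; exact hRsmall
  have hs1 : s ≤ 1 := by nlinarith
  have hs34 : 3/4 ≤ s := by nlinarith
  have hr2 : 1/4 ≤ r^2 := by nlinarith
  have hd2le : d^2 ≤ 1 := by nlinarith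
  have hQ2 : Q^2 ≤ d^2/64 := by
    have h1s : (1-s)^2 ≤ 1/16 := by nlinarith
    have h2 : Q^2 ≤ (d*(1-s)/2)^2 := pow_le_pow_left₀ hQ0.le hQsmall.le 2
    nlinarith [sq_nonneg d]
  have hQr : Q^2 < r^2*d^2 := by nlinarith [mul_pos hd hd]
  obtain ⟨A, hA0, hA2⟩ : ∃ A, 0 ≤ A ∧ A^2 = r^2*d^2 - Q^2 :=
    ⟨Real.sqrt (r^2*d^2 - Q^2), Real.sqrt_nonneg _, Real.sq_sqrt (by linarith)⟩
  have hh0 : 0 ≤ h := by rw [hh]; positivity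
  have hs216 : 9/16 ≤ s^2 := by nlinarith
  have hsum : d^2 + s^2 = 1 := by linarith
  have hkeysq : (d*Q)^2 ≤ (s*A)^2 := by
    have e3 : (9:ℝ)/16*(1/4) ≤ s^2*r^2 := mul_le_mul hs216 hr2 (by norm_num) (sq_nonneg s)
    have e4 : (9:ℝ)/64*d^2 ≤ s^2*r^2*d^2 := by nlinarith [sq_nonneg d]
    nlinarith [sq_nonneg d, sq_nonneg Q]
  have hkey : d*Q ≤ s*A := le_of_sq_le_sq₂ (by positivity) hkeysq (by positivity)
  have h2hQ : 2*h*Q ≤ d*A := by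
    have e0 : 2*h*Q = d*(d*Q)/s := by rw [hh]; field_simp
    have e1 : d*(d*Q)/s ≤ d*(s*A)/s := by gcongr
    have e2 : d*(s*A)/s = d*A := by field_simp
    linarith
  have h0 := hall 0 ⟨le_refl 0, by norm_num⟩
  have hR2Q : R^2 = Q^2 := by rw [hQdef]; ring
  have hT : A^2 + Q^2 = r^2*d^2 := by linarith
  have hdich : A ≤ P ∨ P + d^2 ≤ -A := by
    rcases le_or_gt A P with hcase | hcase
    · exact Or.inl hcase
    · right
      have h0' : r^2*d^2 ≤ P^2 + Q^2 := by rw [hR2Q] at h0; nlinarith [h0]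
      have hP2 : A^2 ≤ P^2 := by rw [hA2]; linarith
      have hPneg : P ≤ -A := by
        have hAbs : A ≤ |P| := le_of_sq_le_sq₂ (abs_nonneg P) (by rw [sq_abs]; exact hP2) hA0
        rcases abs_cases P with ⟨he, _⟩ | ⟨he, _⟩ <;> [linarith [he ▸ hAbs]; linarith [he ▸ hAbs]]
      rcases le_or_gt (P + d^2) (-A) with hcase2 | hcase2
      · exact hcase2
      · exfalso
        have h1 := hall 1 ⟨by norm_num, le_refl 1⟩
        have hP12 : A^2 ≤ (P+d^2)^2 := by rw [hR2Q] at h1; rw [hA2]; nlinarith [h1]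
        have hPd : A ≤ P + d^2 := by
          have hAbs : A ≤ |P + d^2| :=
            le_of_sq_le_sq₂ (abs_nonneg _) (by rw [sq_abs]; exact hP12) hA0
          rcases abs_cases (P + d^2) with ⟨he, _⟩ | ⟨he, _⟩ <;>
            [linarith [he ▸ hAbs]; linarith [he ▸ hAbs]]
        have htstar : -P/d^2 ∈ Set.Icc (0:ℝ) 1 := by
          constructor
          · apply div_nonneg (by linarith) (sq_nonneg d)
          · rw [div_le_one (by positivity)]; linarith
        have h2 := hall _ htstar
        have hz : P + -P/d^2*d^2 = 0 := by field_simp; ring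
        rw [hz, hR2Q] at h2
        nlinarith
  intro t ht
  obtain ⟨ht0, ht1⟩ := ht
  have hM0 : 0 ≤ min t (1-t) := le_min ht0 (by linarith)
  have hMt : min t (1-t) ≤ t := min_le_left _ _
  have hMt' : min t (1-t) ≤ 1 - t := min_le_right _ _
  have hgoalR : R + 2*h*(min t (1-t))*d = 2*h*(min t (1-t))*d - Q := by
    rw [hQdef]; ring
  rw [hgoalR]
  have hXQ : (0:ℝ) ≤ 4*h*d*Q := by positivity
  rcases hdich with hc | hc
  · have hsq1 : (A + t*d^2)^2 ≤ (P + t*d^2)^2 :=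
      pow_le_pow_left₀ (by positivity) (by linarith) 2
    have e1 := mul_le_mul_of_nonneg_left hMt hXQ
    have e2 : (2*t*d)*(2*h*Q) ≤ (2*t*d)*(d*A) :=
      mul_le_mul_of_nonneg_left h2hQ (by positivity)
    have hQM : 2*((2*h*(min t (1-t))*d)*Q) ≤ 2*(A*(t*d^2)) := by
      ring_nf
      ring_nf at e1 e2
      linarith
    exact finstep hsq1 hQM hT
  · have hu0 : (0:ℝ) ≤ (1-t)*d^2 := mul_nonneg (by linarith) (sq_nonneg d)
    have hneg : A + (1-t)*d^2 ≤ -(P + t*d^2) := by nlinarith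
    have hsq1 : (A + (1-t)*d^2)^2 ≤ (P + t*d^2)^2 := by
      calc (A + (1-t)*d^2)^2 ≤ (-(P + t*d^2))^2 := pow_le_pow_left₀ (by linarith) hneg 2
      _ = (P + t*d^2)^2 := by ring
    have e1 := mul_le_mul_of_nonneg_left hMt' hXQ
    have e2 : (2*(1-t)*d)*(2*h*Q) ≤ (2*(1-t)*d)*(d*A) :=
      mul_le_mul_of_nonneg_left h2hQ (by nlinarith)
    have hQM : 2*((2*h*(min t (1-t))*d)*Q) ≤ 2*(A*((1-t)*d^2)) := by
      ring_nf
      ring_nf at e1 e2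
      linarith
    exact finstep hsq1 hQM hT

/-! ### arcsin bounds -/

lemma arcsin_ge {x : ℝ} (h0 : 0 ≤ x) (h1 : x ≤ 1) : x ≤ Real.arcsin x := by
  have := Real.sin_le (Real.arcsin_nonneg.2 h0)
  rwa [Real.sin_arcsin (by linarith) h1] at this

lemma budget {d : ℝ} (h0 : 0 < d) (h1 : d < 1/2) :
    d / Real.sqrt (1 - d^2) + d ≤ Real.arcsin (2*d) := by
  have hpi := Real.pi_gt_three
  set s := Real.sqrt (1 - d^2) with hsdef
  have hd2 : d^2 < 1/4 := by nlinarith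
  have hs0 : 0 < s := Real.sqrt_pos.2 (by nlinarith)
  have hs2 : s^2 = 1 - d^2 := Real.sq_sqrt (by nlinarith)
  have hs08 : (0.8:ℝ) ≤ s := by
    have e : (0.8:ℝ) = Real.sqrt 0.64 := by
      rw [show (0.64:ℝ) = 0.8^2 by norm_num, Real.sqrt_sq (by norm_num)]
    rw [e]
    exact Real.sqrt_le_sqrt (by nlinarith)
  have hg0 : 0 ≤ d/s := by positivity
  have hgle : d/s ≤ 5/8 := by rw [div_le_iff₀ hs0]; nlinarith
  have harc6 : Real.arcsin d ≤ π/6 := by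
    have h2 : Real.arcsin d ≤ Real.arcsin (1/2) := Real.monotone_arcsin (by linarith)
    have h3 : Real.arcsin (1/2) = π/6 := by
      rw [show (1/2:ℝ) = Real.sin (π/6) from (Real.sin_pi_div_six).symm]
      exact Real.arcsin_sin (by linarith) (by linarith)
    linarith
  have harc0 : 0 ≤ Real.arcsin d := Real.arcsin_nonneg.2 h0.le
  have hax : Real.arcsin d + d/s ≤ π/2 := by linarith
  have hax0 : -(π/2) ≤ Real.arcsin d + d/s := by linarith
  have hsin : Real.sin (Real.arcsin d + d/s) ≤ 2*d := by
    rw [Real.sin_add, Real.sin_arcsin (by linarith) (by linarith), Real.cos_arcsin, ← hsdef]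
    have e1 : d * Real.cos (d/s) ≤ d := by
      nlinarith [Real.cos_le_one (d/s), Real.neg_one_le_cos (d/s)]
    have e2 : s * Real.sin (d/s) ≤ d := by
      have := Real.sin_le hg0
      calc s * Real.sin (d/s) ≤ s * (d/s) := by nlinarith
      _ = d := by field_simp
    linarith
  have hx : Real.arcsin d + d/s ≤ Real.arcsin (2*d) :=
    (Real.le_arcsin_iff_sin_le ⟨hax0, hax⟩ ⟨by linarith, by linarith⟩).mpr hsin
  have := arcsin_ge h0.le (by linarith : d ≤ 1)
  linarith

/-! ### path construction -/

section path
variable {E : Type*} [NormedAddCommGroup E] [InnerProductSpace ℝ E]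

lemma pathLip (a : E) (u w : E) (h : ℝ) (hd : 0 < ‖u‖)
    (hwu : ⟪u, w⟫ = 0) (hw : ‖w‖ = ‖u‖) (x y : ℝ) :
    dist (a + x•u + ((h*(1-|2*x-1|))/‖u‖)•w) (a + y•u + ((h*(1-|2*y-1|))/‖u‖)•w)
      ≤ Real.sqrt (‖u‖^2 + 4*h^2) * dist x y := by
  set d := ‖u‖ with hddef
  set τx := h*(1-|2*x-1|) with hτx
  set τy := h*(1-|2*y-1|) with hτy
  have hpt : (a + x•u + (τx/d)•w) - (a + y•u + (τy/d)•w) = (x-y)•u + ((τx-τy)/d)•w := by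
    rw [sub_smul, sub_div, sub_smul]; abel
  rw [dist_eq_norm, hpt]
  have horth : ⟪(x-y)•u, ((τx-τy)/d)•w⟫ = 0 := by
    rw [real_inner_smul_left, real_inner_smul_right, hwu]; ring
  have hnsq : ‖(x-y)•u + ((τx-τy)/d)•w‖^2 = (x-y)^2*d^2 + (τx-τy)^2 := by
    rw [norm_add_sq_real, horth]
    rw [norm_smul, norm_smul, hw, ← hddef]
    simp only [Real.norm_eq_abs, mul_pow, sq_abs]
    rw [div_pow]; field_simp; try ring
  have hτlip : (τx - τy)^2 ≤ 4*h^2*(x-y)^2 := by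
    have e2 : |(|2*y-1|) - (|2*x-1|)| ≤ |(2*y-1) - (2*x-1)| := abs_abs_sub_abs_le_abs_sub _ _
    have e3 : |(2*y-1) - (2*x-1)| = 2*|x-y| := by
      rw [show (2*y-1) - (2*x-1) = 2*(y-x) by ring, abs_mul, abs_sub_comm]
      norm_num
    have e1 : |τx - τy| ≤ |h| * (2*|x-y|) := by
      rw [hτx, hτy, show h*(1-|2*x-1|) - h*(1-|2*y-1|) = h * ((|2*y-1|) - (|2*x-1|)) by ring,
        abs_mul]
      exact mul_le_mul_of_nonneg_left (e3 ▸ e2) (abs_nonneg h)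
    have e4 : |τx - τy|^2 ≤ (|h| * (2*|x-y|))^2 :=
      pow_le_pow_left₀ (abs_nonneg _) e1 2
    calc (τx - τy)^2 = |τx - τy|^2 := (sq_abs _).symm
    _ ≤ (|h| * (2*|x-y|))^2 := e4
    _ = 4*h^2*(x-y)^2 := by rw [mul_pow, mul_pow, sq_abs, sq_abs]; ring
  apply le_of_sq_le_sq₂ (by positivity) _ (norm_nonneg _)
  rw [mul_pow, Real.sq_sqrt (by positivity), Real.dist_eq, sq_abs, hnsq]
  nlinarith [sq_nonneg (x-y), sq_nonneg h]

omit [InnerProductSpace ℝ E] in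
lemma evar_bound (C : ℝ → E) (L : ℝ) (hL0 : 0 ≤ L)
    (hlip : ∀ x y : ℝ, dist (C x) (C y) ≤ L * dist x y) :
    eVariationOn C (Set.Icc 0 1) ≤ ENNReal.ofReal L := by
  have lip : LipschitzWith L.toNNReal C :=
    LipschitzWith.of_dist_le_mul (fun x y => by
      rw [Real.coe_toNNReal _ hL0]; exact hlip x y)
  have hid : eVariationOn (id : ℝ → ℝ) (Set.Icc 0 1) ≤ ENNReal.ofReal 1 := by
    have hmono : MonotoneOn (id : ℝ → ℝ) (Set.Icc 0 1) := fun x _ y _ h => h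
    have := hmono.eVariationOn_le (Set.left_mem_Icc.2 zero_le_one)
      (Set.right_mem_Icc.2 zero_le_one)
    rw [Set.inter_self] at this
    simpa using this
  calc eVariationOn C (Set.Icc 0 1)
      = eVariationOn (C ∘ (id : ℝ → ℝ)) (Set.Icc 0 1) := rfl
  _ ≤ (L.toNNReal : ℝ≥0∞) * eVariationOn (id : ℝ → ℝ) (Set.Icc 0 1) :=
      (lip.lipschitzOnWith (s := Set.univ)).comp_eVariationOn_le (Set.mapsTo_univ _ _)
  _ ≤ (L.toNNReal : ℝ≥0∞) * ENNReal.ofReal 1 := mul_le_mul_right hid _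
  _ = ENNReal.ofReal L := by rw [ENNReal.ofReal_one, mul_one]; rfl

-- squared-norm of segment points, in coordinates
lemma seg_sq (a z u w : E) (hwu : ⟪u, w⟫ = 0)
    (hlag : ∀ v : E, ⟪v, u⟫^2 + ⟪v, w⟫^2 = ‖v‖^2*‖u‖^2) (x : ℝ) :
    (⟪a - z, u⟫ + x*‖u‖^2)^2 + ⟪a - z, w⟫^2 = ‖a + x•u - z‖^2*‖u‖^2 := by
  have hv : a + x•u - z = (a - z) + x•u := by abel
  have h1 : ⟪(a - z) + x•u, u⟫ = ⟪a - z, u⟫ + x*‖u‖^2 := by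
    rw [inner_add_left, real_inner_smul_left, real_inner_self_eq_norm_sq]
  have h2 : ⟪(a - z) + x•u, w⟫ = ⟪a - z, w⟫ := by
    rw [inner_add_left, real_inner_smul_left, hwu]; ring
  rw [hv, ← h1, ← h2]
  exact hlag _

lemma avoid_of_scalar (a z u w : E) (r h : ℝ) (hr0 : 0 ≤ r) (hd : 0 < ‖u‖)
    (hwu : ⟪u, w⟫ = 0) (hw : ‖w‖ = ‖u‖)
    (hlag : ∀ v : E, ⟪v, u⟫^2 + ⟪v, w⟫^2 = ‖v‖^2*‖u‖^2) (t : ℝ)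
    (hsc : r^2*‖u‖^2 ≤
      (⟪a - z, u⟫ + t*‖u‖^2)^2 + (⟪a - z, w⟫ + 2*h*(min t (1-t))*‖u‖)^2) :
    r ≤ dist (a + t•u + ((h*(1-|2*t-1|))/‖u‖)•w) z := by
  have hv : (a + t•u + ((h*(1-|2*t-1|))/‖u‖)•w) - z
      = ((a - z) + t•u) + ((h*(1-|2*t-1|))/‖u‖)•w := by abel
  have h1 : ⟪((a - z) + t•u) + ((h*(1-|2*t-1|))/‖u‖)•w, u⟫ = ⟪a - z, u⟫ + t*‖u‖^2 := by
    rw [inner_add_left, inner_add_left, real_inner_smul_left, real_inner_smul_left,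
      real_inner_self_eq_norm_sq]
    have hwu' : ⟪w, u⟫ = (0:ℝ) := by rw [real_inner_comm]; exact hwu
    rw [hwu']
    ring
  have h2 : ⟪((a - z) + t•u) + ((h*(1-|2*t-1|))/‖u‖)•w, w⟫
      = ⟪a - z, w⟫ + 2*h*(min t (1-t))*‖u‖ := by
    rw [inner_add_left, inner_add_left, real_inner_smul_left, real_inner_smul_left,
      hwu, real_inner_self_eq_norm_sq, hw]
    have e : h*(1-|2*t-1|)/‖u‖*‖u‖^2 = 2*h*(min t (1-t))*‖u‖ := by
      rw [show h*(1-|2*t-1|) = h*(2*(min t (1-t))) from by rw [tent_eq]]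
      field_simp
    rw [e]; ring
  have hlagp := hlag ((a + t•u + ((h*(1-|2*t-1|))/‖u‖)•w) - z)
  rw [hv, h1, h2] at hlagp
  rw [← hv] at hlagp
  have hsq : r^2*‖u‖^2 ≤ ‖(a + t•u + ((h*(1-|2*t-1|))/‖u‖)•w) - z‖^2*‖u‖^2 := by
    rw [← hlagp]; exact hsc
  have hr2 : r^2 ≤ ‖(a + t•u + ((h*(1-|2*t-1|))/‖u‖)•w) - z‖^2 :=
    le_of_mul_le_mul_right (by nlinarith [hsq]) (by positivity : (0:ℝ) < ‖u‖^2)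
  rw [dist_eq_norm]
  exact le_of_sq_le_sq₂ (norm_nonneg _) hr2 hr0

lemma construct (a b z₁ z₂ : E) (r₁ r₂ : ℝ) (hr₁0 : 0 ≤ r₁) (hr₂0 : 0 ≤ r₂)
    (hd : 0 < ‖b - a‖) (w : E) (h : ℝ)
    (hwu : ⟪b - a, w⟫ = 0) (hw : ‖w‖ = ‖b - a‖)
    (hlag : ∀ v : E, ⟪v, b - a⟫^2 + ⟪v, w⟫^2 = ‖v‖^2*‖b - a‖^2)
    (hL : Real.sqrt (‖b - a‖^2 + 4*h^2) ≤ Real.arcsin (2*dist a b) - dist a b)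
    (hsc₁ : ∀ t ∈ Set.Icc (0:ℝ) 1, r₁^2*‖b - a‖^2 ≤
      (⟪a - z₁, b - a⟫ + t*‖b - a‖^2)^2 + (⟪a - z₁, w⟫ + 2*h*(min t (1-t))*‖b - a‖)^2)
    (hsc₂ : ∀ t ∈ Set.Icc (0:ℝ) 1, r₂^2*‖b - a‖^2 ≤
      (⟪a - z₂, b - a⟫ + t*‖b - a‖^2)^2 + (⟪a - z₂, w⟫ + 2*h*(min t (1-t))*‖b - a‖)^2) :
    ∃ C : ℝ → E, ContinuousOn C (Set.Icc 0 1) ∧ C 0 = a ∧ C 1 = b ∧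
      (∀ t ∈ Set.Icc (0:ℝ) 1, C t ∉ ball z₁ r₁ ∧ C t ∉ ball z₂ r₂) ∧
      eVariationOn C (Set.Icc 0 1) ≤ ENNReal.ofReal (Real.arcsin (2 * dist a b) - dist a b) := by
  refine ⟨fun t => a + t•(b - a) + ((h*(1-|2*t-1|))/‖b - a‖)•w, ?_, ?_, ?_, ?_, ?_⟩
  · apply Continuous.continuousOn
    have h1 : Continuous fun t : ℝ => (h*(1-|2*t-1|))/‖b - a‖ := by
      apply Continuous.div_const
      exact continuous_const.mul
        (continuous_const.sub (((continuous_const.mul continuous_id).sub continuous_const).abs))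
    exact (continuous_const.add (continuous_id.smul continuous_const)).add
      (h1.smul continuous_const)
  · norm_num
  · norm_num
  · intro t ht
    constructor
    · have := avoid_of_scalar a z₁ (b - a) w r₁ h hr₁0 hd hwu hw hlag t (hsc₁ t ht)
      rw [mem_ball]
      exact not_lt.2 this
    · have := avoid_of_scalar a z₂ (b - a) w r₂ h hr₂0 hd hwu hw hlag t (hsc₂ t ht)
      rw [mem_ball]
      exact not_lt.2 this
  · refine le_trans (evar_bound _ (Real.sqrt (‖b - a‖^2 + 4*h^2)) (Real.sqrt_nonneg _)
      (fun x y => pathLip a (b - a) w h hd hwu hw x y)) ?_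
    exact ENNReal.ofReal_le_ofReal hL
end path


abbrev E2 := EuclideanSpace ℝ (Fin 2)

lemma Rlower {d r s R : ℝ} (hd : 0 < d) (hr : 1/2 ≤ r) (hs0 : 0 < s) (hs2 : s^2 = 1 - d^2)
    (hR0 : 0 ≤ R) (hRbig : r^2*d^2 - d^4/4 ≤ R^2) : d*s/2 ≤ R := by
  have hr2 : 1/4 ≤ r^2 := by nlinarith
  have hd4 : d^2/4 ≤ r^2*d^2 := by nlinarith [sq_nonneg d]
  have h1 : (d*s/2)^2 ≤ R^2 := by
    have e : (d*s/2)^2 = d^2*s^2/4 := by ring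
    rw [e, hs2]; nlinarith
  exact le_of_sq_le_sq₂ hR0 h1 (by positivity)

lemma s_facts {d s : ℝ} (hs0 : 0 < s) (hs2 : s^2 = 1 - d^2) (hd2 : d^2 < 1/4) :
    3/4 ≤ s := by nlinarith

lemma avoid_core (z₁ z₂ : E2) (r₁ r₂ : ℝ)
    (hr₁ : r₁ ∈ Set.Icc (1/2 : ℝ) 1) (hr₂ : r₂ ∈ Set.Icc (1/2 : ℝ) 1)
    (hz : dist z₁ z₂ < 1/2) (a b : E2)
    (ha₁ : a ∉ ball z₁ r₁) (ha₂ : a ∉ ball z₂ r₂)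
    (hb₁ : b ∉ ball z₁ r₁) (hb₂ : b ∉ ball z₂ r₂)
    (hab : dist a b < 1/2) (hne : a ≠ b)
    (hent : ∃ t ∈ Set.Icc (0:ℝ) 1, a + t•(b - a) ∈ ball z₁ r₁) :
    ∃ C : ℝ → E2, ContinuousOn C (Set.Icc 0 1) ∧ C 0 = a ∧ C 1 = b ∧
      (∀ t ∈ Set.Icc (0:ℝ) 1, C t ∉ ball z₁ r₁ ∧ C t ∉ ball z₂ r₂) ∧
      eVariationOn C (Set.Icc 0 1) ≤
        ENNReal.ofReal (Real.arcsin (2 * dist a b) - dist a b) := by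
  have hd0 : (0:ℝ) < ‖b - a‖ := by
    rw [norm_sub_pos_iff]
    exact hne.symm
  have hdeq : dist a b = ‖b - a‖ := dist_eq_norm' a b
  have hd12 : ‖b - a‖ < 1/2 := hdeq ▸ hab
  have hd2lt : ‖b - a‖^2 < 1/4 := by
    rw [show (1/4:ℝ) = (1/2)^2 by norm_num]
    exact pow_lt_pow_left₀ hd12 (norm_nonneg _) (by norm_num)
  obtain ⟨s, hsv⟩ : ∃ s, s = Real.sqrt (1 - ‖b - a‖^2) := ⟨_, rfl⟩
  have hs0 : 0 < s := by rw [hsv]; exact Real.sqrt_pos.2 (by linarith)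
  have hs2 : s^2 = 1 - ‖b - a‖^2 := by rw [hsv]; exact Real.sq_sqrt (by linarith)
  obtain ⟨h, hhdef⟩ : ∃ h, h = ‖b - a‖^2/(2*s) := ⟨_, rfl⟩
  have hh0 : 0 ≤ h := by rw [hhdef]; positivity
  have hs34 : 3/4 ≤ s := s_facts hs0 hs2 hd2lt
  have r₁0 : (0:ℝ) ≤ r₁ := by linarith [hr₁.1]
  have r₂0 : (0:ℝ) ≤ r₂ := by linarith [hr₂.1]
  -- sign choice
  obtain ⟨ε, hε1, hεR⟩ : ∃ ε : ℝ, (ε = 1 ∨ ε = -1) ∧ 0 ≤ ε * ⟪a - z₁, Jrot (b - a)⟫ := by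
    rcases le_or_gt 0 (⟪a - z₁, Jrot (b - a)⟫ : ℝ) with hcs | hcs
    · exact ⟨1, Or.inl rfl, by linarith⟩
    · exact ⟨-1, Or.inr rfl, by linarith⟩
  have hε2 : ε^2 = 1 := by rcases hε1 with rfl | rfl <;> norm_num
  obtain ⟨w, hwdef⟩ : ∃ w : E2, w = ε • Jrot (b - a) := ⟨_, rfl⟩
  have hwu : ⟪b - a, w⟫ = 0 := by
    rw [hwdef, real_inner_smul_right, jorth]; ring
  have hεabs : ‖ε‖ = 1 := by
    rcases hε1 with rfl | rfl <;> norm_num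
  have hw : ‖w‖ = ‖b - a‖ := by rw [hwdef, norm_smul, hεabs, jnorm, one_mul]
  have hlag : ∀ v : E2, ⟪v, b - a⟫^2 + ⟪v, w⟫^2 = ‖v‖^2*‖b - a‖^2 := by
    intro v
    have hws : ⟪v, w⟫ = ε * ⟪v, Jrot (b - a)⟫ := by rw [hwdef, real_inner_smul_right]
    have hl := lagrangeJ (b - a) v
    rw [hws]
    linear_combination hl + (⟪v, Jrot (b - a)⟫:ℝ)^2 * hε2
  -- scalar facts from points outside balls
  have hout : ∀ (z : E2) (r x : ℝ), 0 ≤ r → (a + x•(b - a) ∉ ball z r) →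
      r^2*‖b - a‖^2 ≤ (⟪a - z, b - a⟫ + x*‖b - a‖^2)^2 + ⟪a - z, w⟫^2 := by
    intro z r x hr0 hnb
    have hge : r ≤ ‖a + x•(b - a) - z‖ := by
      rw [← dist_eq_norm]
      exact not_lt.1 (fun hlt => hnb (mem_ball.2 hlt))
    have hsq : r^2 ≤ ‖a + x•(b - a) - z‖^2 := pow_le_pow_left₀ hr0 hge 2
    calc r^2*‖b - a‖^2 ≤ ‖a + x•(b - a) - z‖^2*‖b - a‖^2 :=
          mul_le_mul_of_nonneg_right hsq (sq_nonneg _)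
    _ = (⟪a - z, b - a⟫ + x*‖b - a‖^2)^2 + ⟪a - z, w⟫^2 :=
          (seg_sq a z (b - a) w hwu hlag x).symm
  have hin : ∀ (z : E2) (r x : ℝ), (a + x•(b - a) ∈ ball z r) →
      (⟪a - z, b - a⟫ + x*‖b - a‖^2)^2 + ⟪a - z, w⟫^2 < r^2*‖b - a‖^2 := by
    intro z r x hnb
    have hlt : ‖a + x•(b - a) - z‖ < r := by
      rw [← dist_eq_norm]; exact mem_ball.1 hnb
    have hsq : ‖a + x•(b - a) - z‖^2 < r^2 :=
      pow_lt_pow_left₀ hlt (norm_nonneg _) (by norm_num)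
    calc (⟪a - z, b - a⟫ + x*‖b - a‖^2)^2 + ⟪a - z, w⟫^2
        = ‖a + x•(b - a) - z‖^2*‖b - a‖^2 := seg_sq a z (b - a) w hwu hlag x
    _ < r^2*‖b - a‖^2 := mul_lt_mul_of_pos_right hsq (by positivity)
  have ha0eq : a + (0:ℝ)•(b - a) = a := by rw [zero_smul, add_zero]
  have hb1eq : a + (1:ℝ)•(b - a) = b := by rw [one_smul]; abel
  have hA1 : r₁^2*‖b - a‖^2 ≤ ⟪a - z₁, b - a⟫^2 + ⟪a - z₁, w⟫^2 := by
    have := hout z₁ r₁ 0 r₁0 (by rw [ha0eq]; exact ha₁)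
    calc r₁^2*‖b - a‖^2 ≤ (⟪a - z₁, b - a⟫ + 0*‖b - a‖^2)^2 + ⟪a - z₁, w⟫^2 := this
    _ = ⟪a - z₁, b - a⟫^2 + ⟪a - z₁, w⟫^2 := by ring
  have hB1 : r₁^2*‖b - a‖^2 ≤ (⟪a - z₁, b - a⟫ + ‖b - a‖^2)^2 + ⟪a - z₁, w⟫^2 := by
    have := hout z₁ r₁ 1 r₁0 (by rw [hb1eq]; exact hb₁)
    calc r₁^2*‖b - a‖^2 ≤ (⟪a - z₁, b - a⟫ + 1*‖b - a‖^2)^2 + ⟪a - z₁, w⟫^2 := this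
    _ = (⟪a - z₁, b - a⟫ + ‖b - a‖^2)^2 + ⟪a - z₁, w⟫^2 := by ring
  have hA2 : r₂^2*‖b - a‖^2 ≤ ⟪a - z₂, b - a⟫^2 + ⟪a - z₂, w⟫^2 := by
    have := hout z₂ r₂ 0 r₂0 (by rw [ha0eq]; exact ha₂)
    calc r₂^2*‖b - a‖^2 ≤ (⟪a - z₂, b - a⟫ + 0*‖b - a‖^2)^2 + ⟪a - z₂, w⟫^2 := this
    _ = ⟪a - z₂, b - a⟫^2 + ⟪a - z₂, w⟫^2 := by ring
  have hB2 : r₂^2*‖b - a‖^2 ≤ (⟪a - z₂, b - a⟫ + ‖b - a‖^2)^2 + ⟪a - z₂, w⟫^2 := by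
    have := hout z₂ r₂ 1 r₂0 (by rw [hb1eq]; exact hb₂)
    calc r₂^2*‖b - a‖^2 ≤ (⟪a - z₂, b - a⟫ + 1*‖b - a‖^2)^2 + ⟪a - z₂, w⟫^2 := this
    _ = (⟪a - z₂, b - a⟫ + ‖b - a‖^2)^2 + ⟪a - z₂, w⟫^2 := by ring
  -- ball 1 entered
  obtain ⟨t₁, ht₁, hmem₁⟩ := hent
  have hE1 : (⟪a - z₁, b - a⟫ + t₁*‖b - a‖^2)^2 + ⟪a - z₁, w⟫^2 < r₁^2*‖b - a‖^2 :=
    hin z₁ r₁ t₁ hmem₁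
  obtain ⟨hP1, hP1d, hR1big⟩ := scalA ht₁ hA1 hB1 hE1
  have hR10 : 0 ≤ ⟪a - z₁, w⟫ := by
    rw [hwdef, real_inner_smul_right]; exact hεR
  have hR1ds : ‖b - a‖*s/2 ≤ ⟪a - z₁, w⟫ := Rlower hd0 hr₁.1 hs0 hs2 hR10 hR1big
  have hsc₁ : ∀ t ∈ Set.Icc (0:ℝ) 1, r₁^2*‖b - a‖^2 ≤
      (⟪a - z₁, b - a⟫ + t*‖b - a‖^2)^2 +
        (⟪a - z₁, w⟫ + 2*h*(min t (1-t))*‖b - a‖)^2 := by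
    intro t ht
    exact scalEnter hd0 hr₁.1 hs0 hs2 hhdef hP1 hP1d hR10 hR1big hA1 hB1 ht.1 ht.2
  -- difference of the R coordinates
  have hRdiff : |⟪a - z₁, w⟫ - ⟪a - z₂, w⟫| < ‖b - a‖/2 := by
    have e1 : ⟪a - z₁, w⟫ - ⟪a - z₂, w⟫ = ⟪z₂ - z₁, w⟫ := by
      rw [← inner_sub_left]
      congr 1
      abel
    rw [e1]
    have e2 : |(⟪z₂ - z₁, w⟫:ℝ)| ≤ ‖z₂ - z₁‖ * ‖w‖ := abs_real_inner_le_norm _ _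
    have e3 : ‖z₂ - z₁‖ < 1/2 := by
      rw [← dist_eq_norm, dist_comm]; exact hz
    have e4 : ‖z₂ - z₁‖ * ‖w‖ < (1/2) * ‖b - a‖ := by
      rw [hw]
      exact mul_lt_mul_of_pos_right e3 hd0
    calc |(⟪z₂ - z₁, w⟫:ℝ)| ≤ ‖z₂ - z₁‖ * ‖w‖ := e2
    _ < (1/2) * ‖b - a‖ := e4
    _ = ‖b - a‖/2 := by ring
  -- ball 2 : entered or not
  have hsc₂ : ∀ t ∈ Set.Icc (0:ℝ) 1, r₂^2*‖b - a‖^2 ≤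
      (⟪a - z₂, b - a⟫ + t*‖b - a‖^2)^2 +
        (⟪a - z₂, w⟫ + 2*h*(min t (1-t))*‖b - a‖)^2 := by
    by_cases hent₂ : ∃ t ∈ Set.Icc (0:ℝ) 1, a + t•(b - a) ∈ ball z₂ r₂
    · obtain ⟨t₂, ht₂, hmem₂⟩ := hent₂
      have hE2 := hin z₂ r₂ t₂ hmem₂
      obtain ⟨hP2, hP2d, hR2big⟩ := scalA ht₂ hA2 hB2 hE2
      have hR2abs : ‖b - a‖*s/2 ≤ |⟪a - z₂, w⟫| :=
        Rlower hd0 hr₂.1 hs0 hs2 (abs_nonneg _) (by rw [sq_abs]; exact hR2big)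
      have hR20 : 0 ≤ ⟪a - z₂, w⟫ := by
        by_contra hneg
        push_neg at hneg
        have habs2 : ⟪a - z₂, w⟫ ≤ -(‖b - a‖*s/2) := by
          rcases abs_cases (⟪a - z₂, w⟫:ℝ) with ⟨he, _⟩ | ⟨he, _⟩
          · linarith [he ▸ hR2abs]
          · linarith [he ▸ hR2abs]
        have hds : ‖b - a‖*(3/4) ≤ ‖b - a‖*s :=
          mul_le_mul_of_nonneg_left hs34 (norm_nonneg _)
        obtain ⟨l1, l2⟩ := abs_lt.1 hRdiff
        linarith
      intro t ht
      exact scalEnter hd0 hr₂.1 hs0 hs2 hhdef hP2 hP2d hR20 hR2big hA2 hB2 ht.1 ht.2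
    · push_neg at hent₂
      have hall₂ : ∀ t ∈ Set.Icc (0:ℝ) 1, r₂^2*‖b - a‖^2 ≤
          (⟪a - z₂, b - a⟫ + t*‖b - a‖^2)^2 + ⟪a - z₂, w⟫^2 :=
        fun t ht => hout z₂ r₂ t r₂0 (hent₂ t ht)
      rcases le_or_gt 0 (⟪a - z₂, w⟫:ℝ) with hR20 | hR20
      · intro t ht
        exact scalFar hh0 hd0 hR20 ht.1 ht.2 (hall₂ t ht)
      · have hRsmall : -⟪a - z₂, w⟫ < ‖b - a‖*(1-s)/2 := by
          have := abs_lt.1 hRdiff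
          linarith [this.1, this.2]
        exact scalNear hd0 hd12 hr₂.1 hs0 hs2 hhdef hR20 hRsmall hall₂
  -- budget
  have hLbud : Real.sqrt (‖b - a‖^2 + 4*h^2) ≤ Real.arcsin (2*dist a b) - dist a b := by
    have e : ‖b - a‖^2 + 4*h^2 = (‖b - a‖/s)^2 := by
      rw [hhdef]
      field_simp
      linear_combination 4 * hs2
    rw [e, Real.sqrt_sq (by positivity)]
    have hd0' : 0 < dist a b := by rw [hdeq]; exact hd0
    have hbud := budget hd0' hab
    rw [hdeq] at hbud ⊢
    rw [← hsv] at hbud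
    linarith
  exact construct a b z₁ z₂ r₁ r₂ r₁0 r₂0 hd0 w h hwu hw hlag hLbud hsc₁ hsc₂
end AvoidTwoDisks

/-- Avoiding two overlapping disks in the plane: there is a rectifiable curve from `a`
to `b` avoiding the union of the disks, of length at most `arcsin(2‖a-b‖) - ‖a-b‖`. -/
theorem avoid_two_disks (z₁ z₂ : EuclideanSpace ℝ (Fin 2)) (r₁ r₂ : ℝ)
    (hr₁ : r₁ ∈ Set.Icc (1/2 : ℝ) 1) (hr₂ : r₂ ∈ Set.Icc (1/2 : ℝ) 1)
    (hz : dist z₁ z₂ < 1/2)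
    (a b : EuclideanSpace ℝ (Fin 2))
    (ha : a ∉ ball z₁ r₁ ∪ ball z₂ r₂) (hb : b ∉ ball z₁ r₁ ∪ ball z₂ r₂)
    (hab : dist a b < 1/2)
    (m : EuclideanSpace ℝ (Fin 2)) (hm : m ∈ ball z₁ r₁ ∩ ball z₂ r₂)
    (hcol : ¬ Collinear ℝ ({m, a, b} : Set (EuclideanSpace ℝ (Fin 2)))) :
    ∃ C : ℝ → EuclideanSpace ℝ (Fin 2),
      ContinuousOn C (Set.Icc 0 1) ∧ C 0 = a ∧ C 1 = b ∧
      (∀ t ∈ Set.Icc (0:ℝ) 1, C t ∉ ball z₁ r₁ ∪ ball z₂ r₂) ∧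
      eVariationOn C (Set.Icc 0 1) ≤
        ENNReal.ofReal (Real.arcsin (2 * dist a b) - dist a b) := by
  classical
  have ha₁ : a ∉ ball z₁ r₁ := fun hh => ha (Or.inl hh)
  have ha₂ : a ∉ ball z₂ r₂ := fun hh => ha (Or.inr hh)
  have hb₁ : b ∉ ball z₁ r₁ := fun hh => hb (Or.inl hh)
  have hb₂ : b ∉ ball z₂ r₂ := fun hh => hb (Or.inr hh)
  have hne : a ≠ b := by
    rintro rfl
    apply hcol
    have he : ({m, a, a} : Set (EuclideanSpace ℝ (Fin 2))) = {m, a} := by simp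
    rw [he]
    exact collinear_pair ℝ m a
  by_cases hent₁ : ∃ t ∈ Set.Icc (0:ℝ) 1, a + t•(b - a) ∈ ball z₁ r₁
  · obtain ⟨C, hC1, hC2, hC3, hC4, hC5⟩ :=
      AvoidTwoDisks.avoid_core z₁ z₂ r₁ r₂ hr₁ hr₂ hz a b ha₁ ha₂ hb₁ hb₂ hab hne hent₁
    refine ⟨C, hC1, hC2, hC3, ?_, hC5⟩
    intro t ht hmem
    rcases hmem with hh | hh
    · exact (hC4 t ht).1 hh
    · exact (hC4 t ht).2 hh
  by_cases hent₂ : ∃ t ∈ Set.Icc (0:ℝ) 1, a + t•(b - a) ∈ ball z₂ r₂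
  · obtain ⟨C, hC1, hC2, hC3, hC4, hC5⟩ :=
      AvoidTwoDisks.avoid_core z₂ z₁ r₂ r₁ hr₂ hr₁ (by rwa [dist_comm]) a b
        ha₂ ha₁ hb₂ hb₁ hab hne hent₂
    refine ⟨C, hC1, hC2, hC3, ?_, hC5⟩
    intro t ht hmem
    rcases hmem with hh | hh
    · exact (hC4 t ht).2 hh
    · exact (hC4 t ht).1 hh
  · -- straight segment works
    push_neg at hent₁ hent₂
    have hd0 : (0:ℝ) < ‖b - a‖ := by
      rw [norm_sub_pos_iff]
      exact hne.symm
    have hdeq : dist a b = ‖b - a‖ := dist_eq_norm' a b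
    have hd12 : ‖b - a‖ < 1/2 := hdeq ▸ hab
    have r₁0 : (0:ℝ) ≤ r₁ := by linarith [hr₁.1]
    have r₂0 : (0:ℝ) ≤ r₂ := by linarith [hr₂.1]
    have hwu : (⟪b - a, AvoidTwoDisks.Jrot (b - a)⟫:ℝ) = 0 := AvoidTwoDisks.jorth (b - a)
    have hw : ‖AvoidTwoDisks.Jrot (b - a)‖ = ‖b - a‖ := AvoidTwoDisks.jnorm (b - a)
    have hlag : ∀ v : EuclideanSpace ℝ (Fin 2),
        (⟪v, b - a⟫:ℝ)^2 + (⟪v, AvoidTwoDisks.Jrot (b - a)⟫:ℝ)^2 = ‖v‖^2*‖b - a‖^2 :=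
      fun v => AvoidTwoDisks.lagrangeJ (b - a) v
    have hout : ∀ (z : EuclideanSpace ℝ (Fin 2)) (r x : ℝ), 0 ≤ r →
        (a + x•(b - a) ∉ ball z r) →
        r^2*‖b - a‖^2 ≤ (⟪a - z, b - a⟫ + x*‖b - a‖^2)^2 + (⟪a - z, AvoidTwoDisks.Jrot (b - a)⟫:ℝ)^2 := by
      intro z r x hr0 hnb
      have hge : r ≤ ‖a + x•(b - a) - z‖ := by
        rw [← dist_eq_norm]
        exact not_lt.1 (fun hlt => hnb (mem_ball.2 hlt))
      have hsq : r^2 ≤ ‖a + x•(b - a) - z‖^2 := pow_le_pow_left₀ hr0 hge 2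
      calc r^2*‖b - a‖^2 ≤ ‖a + x•(b - a) - z‖^2*‖b - a‖^2 :=
            mul_le_mul_of_nonneg_right hsq (sq_nonneg _)
      _ = (⟪a - z, b - a⟫ + x*‖b - a‖^2)^2 + (⟪a - z, AvoidTwoDisks.Jrot (b - a)⟫:ℝ)^2 :=
            (AvoidTwoDisks.seg_sq a z (b - a) (AvoidTwoDisks.Jrot (b - a)) hwu hlag x).symm
    have hsc₁ : ∀ t ∈ Set.Icc (0:ℝ) 1, r₁^2*‖b - a‖^2 ≤
        (⟪a - z₁, b - a⟫ + t*‖b - a‖^2)^2 +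
          (⟪a - z₁, AvoidTwoDisks.Jrot (b - a)⟫ + 2*(0:ℝ)*(min t (1-t))*‖b - a‖)^2 := by
      intro t ht
      have e : (⟪a - z₁, AvoidTwoDisks.Jrot (b - a)⟫:ℝ) + 2*(0:ℝ)*(min t (1-t))*‖b - a‖
          = ⟪a - z₁, AvoidTwoDisks.Jrot (b - a)⟫ := by ring
      rw [e]
      exact hout z₁ r₁ t r₁0 (hent₁ t ht)
    have hsc₂ : ∀ t ∈ Set.Icc (0:ℝ) 1, r₂^2*‖b - a‖^2 ≤
        (⟪a - z₂, b - a⟫ + t*‖b - a‖^2)^2 +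
          (⟪a - z₂, AvoidTwoDisks.Jrot (b - a)⟫ + 2*(0:ℝ)*(min t (1-t))*‖b - a‖)^2 := by
      intro t ht
      have e : (⟪a - z₂, AvoidTwoDisks.Jrot (b - a)⟫:ℝ) + 2*(0:ℝ)*(min t (1-t))*‖b - a‖
          = ⟪a - z₂, AvoidTwoDisks.Jrot (b - a)⟫ := by ring
      rw [e]
      exact hout z₂ r₂ t r₂0 (hent₂ t ht)
    have hL : Real.sqrt (‖b - a‖^2 + 4*(0:ℝ)^2) ≤ Real.arcsin (2*dist a b) - dist a b := by
      have e : ‖b - a‖^2 + 4*(0:ℝ)^2 = ‖b - a‖^2 := by ring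
      rw [e, Real.sqrt_sq hd0.le, hdeq]
      have harc := AvoidTwoDisks.arcsin_ge (by positivity : (0:ℝ) ≤ 2*‖b - a‖)
        (by linarith : 2*‖b - a‖ ≤ 1)
      linarith
    obtain ⟨C, hC1, hC2, hC3, hC4, hC5⟩ :=
      AvoidTwoDisks.construct a b z₁ z₂ r₁ r₂ r₁0 r₂0 hd0 (AvoidTwoDisks.Jrot (b - a)) 0
        hwu hw hlag hL hsc₁ hsc₂
    refine ⟨C, hC1, hC2, hC3, ?_, hC5⟩
    intro t ht hmem
    rcases hmem with hh | hh
    · exact (hC4 t ht).1 hh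
    · exact (hC4 t ht).2 hh
end

section
/- For every r ≥ 1/2 and every x with 0 ≤ x ≤ 2r, we have 2r·arcsin(x/(2r)) ≤ arcsin(x) whenever x ≤ 1; more generally, the function r ↦ 2r·arcsin(x/(2r)) is monotonically decreasing in r for fixed x ≥ 0 (on the domain where x/(2r) ≤ 1). -/
open Real

lemma sin_lam (θ lam : ℝ) (hθ0 : 0 ≤ θ) (hθ : θ ≤ π) (h0 : 0 ≤ lam) (h1 : lam ≤ 1) :
    lam * Real.sin θ ≤ Real.sin (lam * θ) := by
  have h2 : (0:ℝ) ≤ 1 - lam := by linarith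
  have hsum : lam + (1 - lam) = 1 := by ring
  have := strictConcaveOn_sin_Icc.concaveOn.2 (x := θ) (y := 0)
    ⟨hθ0, hθ⟩ ⟨le_rfl, Real.pi_pos.le⟩ h0 h2 hsum
  simpa using this

lemma key (u v : ℝ) (hu : 0 ≤ u) (huv : u ≤ v) (hv : v ≤ 1) :
    v * Real.arcsin u ≤ u * Real.arcsin v := by
  rcases eq_or_lt_of_le (hu.trans huv) with h | hvpos
  · have : u = 0 := le_antisymm (huv.trans h.symm.le) hu
    simp [this, ← h]
  set θ := Real.arcsin v with hθdef
  have hθ0 : 0 ≤ θ := Real.arcsin_nonneg.2 (hu.trans huv)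
  have hθle : θ ≤ π / 2 := Real.arcsin_le_pi_div_two v
  set lam := u / v with hlam
  have hlam0 : 0 ≤ lam := div_nonneg hu hvpos.le
  have hlam1 : lam ≤ 1 := (div_le_one hvpos).2 huv
  have hsin : lam * Real.sin θ ≤ Real.sin (lam * θ) :=
    sin_lam θ lam hθ0 (hθle.trans (by linarith [Real.pi_pos])) hlam0 hlam1
  have hsθ : Real.sin θ = v := Real.sin_arcsin (by linarith) hv
  have hu' : u ≤ Real.sin (lam * θ) := by
    rw [hsθ] at hsin; rw [hlam] at hsin ⊢
    calc u = u / v * v := by field_simp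
    _ ≤ _ := hsin
  have harc : Real.arcsin u ≤ lam * θ := by
    calc Real.arcsin u ≤ Real.arcsin (Real.sin (lam * θ)) :=
          Real.monotone_arcsin hu'
    _ = lam * θ := Real.arcsin_sin (by nlinarith [Real.pi_pos]) (by nlinarith)
  calc v * Real.arcsin u ≤ v * (lam * θ) := by nlinarith
  _ = u * Real.arcsin v := by rw [hlam]; field_simp; rw [hθdef]

/-- Arc-length of a circular arc of radius `r` over a chord of length `x`:
`2r·arcsin(x/(2r)) ≤ arcsin x` for `r ≥ 1/2` and `0 ≤ x ≤ min (2r) 1`; more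
generally `r ↦ 2r·arcsin(x/(2r))` is monotonically decreasing in `r`. -/
theorem arc_length_antitone_in_radius :
    (∀ r : ℝ, 1/2 ≤ r → ∀ x : ℝ, 0 ≤ x → x ≤ 2 * r → x ≤ 1 →
      2 * r * Real.arcsin (x / (2 * r)) ≤ Real.arcsin x) ∧
    (∀ x : ℝ, 0 ≤ x → ∀ r s : ℝ, 0 < r → r ≤ s → x ≤ 2 * r →
      2 * s * Real.arcsin (x / (2 * s)) ≤ 2 * r * Real.arcsin (x / (2 * r))) := by
  have main : ∀ x : ℝ, 0 ≤ x → ∀ r s : ℝ, 0 < r → r ≤ s → x ≤ 2 * r →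
      2 * s * Real.arcsin (x / (2 * s)) ≤ 2 * r * Real.arcsin (x / (2 * r)) := by
    intro x hx r s hr hrs hxr
    rcases eq_or_lt_of_le hx with h | hxpos
    · simp [← h]
    have hs : 0 < s := hr.trans_le hrs
    have h1 := key (x / (2 * s)) (x / (2 * r)) (by positivity)
      (by apply div_le_div_of_nonneg_left hx (by linarith) (by linarith))
      ((div_le_one (by linarith)).2 hxr)
    rw [div_mul_eq_mul_div, div_mul_eq_mul_div, div_le_div_iff₀ (by linarith) (by linarith)] at h1
    nlinarith [h1]
  refine ⟨fun r hr x hx hxr hx1 => ?_, main⟩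
  have := main x hx (1/2) r (by norm_num) hr (by linarith)
  simpa using this
end

section
/- Let x, y, m ∈ ℝ³ with ‖x − y‖, ‖x − m‖, ‖y − m‖ < 1/2, and let a, b ∈ ℝ³ with dist(a, {x,y}) ≥ 1, dist(b, {x,y}) ≥ 1 and ‖a − b‖ < 1/2. If a, b, m are collinear, then the straight segment from a to b is disjoint from the open balls of radius 1 around x and around y. -/
open Metric

private lemma aux_disjoint (c m a b : EuclideanSpace ℝ (Fin 3))
    (hcm : dist c m < 1/2) (hac : 1 ≤ dist a c) (hbc : 1 ≤ dist b c)
    (hab : dist a b < 1/2)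
    (hw : Wbtw ℝ a b m ∨ Wbtw ℝ b m a ∨ Wbtw ℝ m a b) :
    Disjoint (segment ℝ a b) (ball c 1) := by
  rw [Set.disjoint_left]
  intro p hp hpc
  have hpw : Wbtw ℝ a p b := mem_segment_iff_wbtw.1 hp
  have ham : (1:ℝ)/2 < dist a m := by
    have := dist_triangle a m c
    rw [dist_comm m c] at this
    linarith [hac]
  have hmball : m ∈ ball c 1 := by
    rw [mem_ball, dist_comm]; linarith
  have hpball : p ∈ ball c 1 := hpc
  rcases hw with h | h | h
  · -- b between p and m
    have hb : Wbtw ℝ p b m := h.trans_left_right hpw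
    have : b ∈ ball c 1 :=
      (convex_ball c 1).segment_subset hpball hmball hb.mem_segment
    rw [mem_ball] at this; linarith
  · -- m between b and a: contradiction with ham
    have := h.dist_add_dist
    rw [dist_comm b a] at this
    have h1 : dist m a ≤ dist a b := by linarith [dist_nonneg (x := b) (y := m)]
    rw [dist_comm m a] at h1
    linarith
  · -- a between p and m
    have ha : Wbtw ℝ p a m := h.symm.trans_left_right hpw.symm
    have : a ∈ ball c 1 :=
      (convex_ball c 1).segment_subset hpball hmball ha.mem_segment
    rw [mem_ball] at this; linarith

/-- If `a`, `b`, `m` are collinear, `m` is within `1/2` of `x` and `y`, the points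
`a`, `b` are at distance at least `1` from both `x` and `y`, and `‖a-b‖ < 1/2`, then
the segment from `a` to `b` avoids the open unit balls around `x` and around `y`. -/
theorem collinear_segment_avoids_balls
    (x y m a b : EuclideanSpace ℝ (Fin 3))
    (hxy : dist x y < 1/2) (hxm : dist x m < 1/2) (hym : dist y m < 1/2)
    (hax : 1 ≤ dist a x) (hay : 1 ≤ dist a y)
    (hbx : 1 ≤ dist b x) (hby : 1 ≤ dist b y)
    (hab : dist a b < 1/2)
    (hcol : Collinear ℝ ({a, b, m} : Set (EuclideanSpace ℝ (Fin 3)))) :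
    Disjoint (segment ℝ a b) (ball x 1) ∧ Disjoint (segment ℝ a b) (ball y 1) := by
  have hw := hcol.wbtw_or_wbtw_or_wbtw
  exact ⟨aux_disjoint x m a b hxm hax hbx hab hw,
         aux_disjoint y m a b hym hay hby hab hw⟩
end

section
/- Let C₁, C₂ : S¹ → ℝ³ be two closed curves with dist(im C₁, im C₂) ≥ 1 such that C₁ and C₂ are topologically linked (nonzero linking number). Then length(C₁) ≥ 2π. -/
open Set Real
open scoped RealInnerProductSpace ENNReal

section Aux
variable {E : Type*} [NormedAddCommGroup E] [InnerProductSpace ℝ E]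

/-- Triangle inequality for the spherical (arccos of inner product) distance
between unit vectors. -/
lemma arccos_inner_triangle {x y z : E} (hx : ‖x‖ = 1) (hy : ‖y‖ = 1) (hz : ‖z‖ = 1) :
    Real.arccos ⟪x, z⟫ ≤ Real.arccos ⟪x, y⟫ + Real.arccos ⟪y, z⟫ := by
  have hxy : |⟪x, y⟫| ≤ 1 := by
    have := abs_real_inner_le_norm x y; rwa [hx, hy, one_mul] at this
  have hyz : |⟪y, z⟫| ≤ 1 := by
    have := abs_real_inner_le_norm y z; rwa [hy, hz, one_mul] at this
  have hxz : |⟪x, z⟫| ≤ 1 := by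
    have := abs_real_inner_le_norm x z; rwa [hx, hz, one_mul] at this
  obtain ⟨hxy1, hxy2⟩ := abs_le.1 hxy
  obtain ⟨hyz1, hyz2⟩ := abs_le.1 hyz
  obtain ⟨hxz1, hxz2⟩ := abs_le.1 hxz
  -- key inequality
  have key : ⟪x, y⟫ * ⟪y, z⟫ - Real.sqrt (1 - ⟪x, y⟫ ^ 2) * Real.sqrt (1 - ⟪y, z⟫ ^ 2)
      ≤ ⟪x, z⟫ := by
    set x' := x - ⟪x, y⟫ • y with hx'
    set z' := z - ⟪y, z⟫ • y with hz'
    have hyy : ⟪y, y⟫ = 1 := by rw [real_inner_self_eq_norm_sq, hy]; norm_num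
    have hinner : ⟪x', z'⟫ = ⟪x, z⟫ - ⟪x, y⟫ * ⟪y, z⟫ := by
      simp only [hx', hz', inner_sub_left, inner_sub_right, real_inner_smul_left,
        real_inner_smul_right, hyy]
      rw [real_inner_comm y x]
      ring
    have hxn : ‖x'‖ ^ 2 = 1 - ⟪x, y⟫ ^ 2 := by
      rw [← real_inner_self_eq_norm_sq]
      simp only [hx', inner_sub_left, inner_sub_right, real_inner_smul_left,
        real_inner_smul_right, hyy]
      rw [real_inner_self_eq_norm_sq, hx, real_inner_comm y x]
      ring
    have hzn : ‖z'‖ ^ 2 = 1 - ⟪y, z⟫ ^ 2 := by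
      rw [← real_inner_self_eq_norm_sq]
      simp only [hz', inner_sub_left, inner_sub_right, real_inner_smul_left,
        real_inner_smul_right, hyy]
      rw [real_inner_self_eq_norm_sq, hz, real_inner_comm y z]
      ring
    have habs : |⟪x', z'⟫| ≤ ‖x'‖ * ‖z'‖ := abs_real_inner_le_norm x' z'
    have hxe : ‖x'‖ = Real.sqrt (1 - ⟪x, y⟫ ^ 2) := by
      rw [← hxn, Real.sqrt_sq (norm_nonneg _)]
    have hze : ‖z'‖ = Real.sqrt (1 - ⟪y, z⟫ ^ 2) := by
      rw [← hzn, Real.sqrt_sq (norm_nonneg _)]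
    rw [hxe, hze] at habs
    rw [hinner] at habs
    have := (abs_le.1 habs).1
    linarith
  by_cases hπ : π ≤ Real.arccos ⟪x, y⟫ + Real.arccos ⟪y, z⟫
  · exact (Real.arccos_le_pi _).trans hπ
  push_neg at hπ
  have hsum0 : 0 ≤ Real.arccos ⟪x, y⟫ + Real.arccos ⟪y, z⟫ :=
    add_nonneg (Real.arccos_nonneg _) (Real.arccos_nonneg _)
  have hcos : Real.cos (Real.arccos ⟪x, y⟫ + Real.arccos ⟪y, z⟫) ≤ ⟪x, z⟫ := by
    rw [Real.cos_add, Real.cos_arccos hxy1 hxy2, Real.cos_arccos hyz1 hyz2,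
      Real.sin_arccos, Real.sin_arccos]
    exact key
  have hmono : ∀ {p q : ℝ}, -1 ≤ p → q ≤ 1 → p ≤ q → Real.arccos q ≤ Real.arccos p := by
    intro p q hp hq hpq
    rcases eq_or_lt_of_le hpq with h | h
    · rw [h]
    · exact (Real.strictAntiOn_arccos ⟨hp, hpq.trans hq⟩ ⟨hp.trans hpq, hq⟩ h).le
  calc Real.arccos ⟪x, z⟫
      ≤ Real.arccos (Real.cos (Real.arccos ⟪x, y⟫ + Real.arccos ⟪y, z⟫)) :=
        hmono (Real.neg_one_le_cos _) hxz2 hcos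
    _ = Real.arccos ⟪x, y⟫ + Real.arccos ⟪y, z⟫ := Real.arccos_cos hsum0 hπ.le

/-- Chord length in terms of the spherical distance, for unit vectors. -/
lemma chord_eq_sin {x y : E} (hx : ‖x‖ = 1) (hy : ‖y‖ = 1) :
    ‖x - y‖ = 2 * Real.sin (Real.arccos ⟪x, y⟫ / 2) := by
  have hxy : |⟪x, y⟫| ≤ 1 := by
    have := abs_real_inner_le_norm x y; rwa [hx, hy, one_mul] at this
  obtain ⟨h1, h2⟩ := abs_le.1 hxy
  have hd0 : 0 ≤ Real.arccos ⟪x, y⟫ / 2 := div_nonneg (Real.arccos_nonneg _) (by norm_num)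
  have hdπ : Real.arccos ⟪x, y⟫ / 2 ≤ π := by
    have := Real.arccos_le_pi ⟪x, y⟫; linarith [Real.pi_pos]
  have hs0 : 0 ≤ Real.sin (Real.arccos ⟪x, y⟫ / 2) :=
    Real.sin_nonneg_of_nonneg_of_le_pi hd0 hdπ
  have hcc : ⟪x, y⟫ = 1 - 2 * Real.sin (Real.arccos ⟪x, y⟫ / 2) ^ 2 := by
    have harg : Real.arccos ⟪x, y⟫ = 2 * (Real.arccos ⟪x, y⟫ / 2) := by ring
    have h3 := Real.sin_sq_add_cos_sq (Real.arccos ⟪x, y⟫ / 2)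
    nth_rewrite 1 [← Real.cos_arccos h1 h2, harg, Real.cos_two_mul]
    linarith
  have hsq : ‖x - y‖ ^ 2 = (2 * Real.sin (Real.arccos ⟪x, y⟫ / 2)) ^ 2 := by
    rw [norm_sub_sq_real, hx, hy]
    nth_rewrite 1 [hcc]
    ring
  have := congrArg Real.sqrt hsq
  rwa [Real.sqrt_sq (norm_nonneg _), Real.sqrt_sq (by positivity)] at this

/-- If the chord between unit vectors is at most `2 sin t`, the spherical distance is
controlled by `(t / sin t)` times the chord. -/
lemma arccos_le_of_chord {x y : E} (hx : ‖x‖ = 1) (hy : ‖y‖ = 1) {t : ℝ}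
    (ht0 : 0 < t) (htπ : t ≤ π / 2) (hch : ‖x - y‖ ≤ 2 * Real.sin t) :
    Real.arccos ⟪x, y⟫ ≤ t / Real.sin t * ‖x - y‖ := by
  have hst : 0 < Real.sin t :=
    Real.sin_pos_of_pos_of_lt_pi ht0 (lt_of_le_of_lt htπ (by linarith [Real.pi_pos]))
  set d := Real.arccos ⟪x, y⟫ with hdd
  have hd0 : 0 ≤ d := Real.arccos_nonneg _
  have hdπ : d ≤ π := Real.arccos_le_pi _
  have hch' : ‖x - y‖ = 2 * Real.sin (d / 2) := chord_eq_sin hx hy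
  have hd2 : Real.sin (d / 2) ≤ Real.sin t := by
    rw [hch'] at hch; linarith
  have hdle : d / 2 ≤ t := by
    by_contra hcon
    push_neg at hcon
    have : Real.sin t < Real.sin (d / 2) := by
      apply Real.strictMonoOn_sin ⟨by linarith, htπ⟩ ⟨by linarith, by linarith⟩ hcon
    linarith
  have hconc : d / 2 / t * Real.sin t ≤ Real.sin (d / 2) := by
    have hmem0 : (0 : ℝ) ∈ Icc (0 : ℝ) π := ⟨le_rfl, Real.pi_pos.le⟩
    have hmemt : t ∈ Icc (0 : ℝ) π := ⟨ht0.le, by linarith [Real.pi_pos]⟩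
    have hl0 : 0 ≤ d / 2 / t := by positivity
    have hl1 : d / 2 / t ≤ 1 := by
      rw [div_le_one ht0]; exact hdle
    have hcc := strictConcaveOn_sin_Icc.concaveOn.2 hmem0 hmemt
      (by linarith : (0:ℝ) ≤ 1 - d / 2 / t) hl0 (by ring)
    have harg : (1 - d / 2 / t) • (0:ℝ) + (d / 2 / t) • t = d / 2 := by
      simp only [smul_eq_mul, mul_zero, zero_add]; exact div_mul_cancel₀ _ ht0.ne'
    rw [harg] at hcc
    simpa [Real.sin_zero] using hcc
  rw [hch']
  rw [div_mul_eq_mul_div, le_div_iff₀ hst]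
  have h' := mul_le_mul_of_nonneg_left hconc ht0.le
  have he : t * (d / 2 / t * Real.sin t) = d / 2 * Real.sin t := by
    field_simp
  rw [he] at h'
  linarith

/-- Chaining the triangle inequality along a sequence of unit vectors. -/
lemma arccos_chain {x : ℕ → E} (hx : ∀ i, ‖x i‖ = 1) (m : ℕ) :
    Real.arccos ⟪x 0, x m⟫ ≤ ∑ i ∈ Finset.range m, Real.arccos ⟪x i, x (i + 1)⟫ := by
  induction m with
  | zero =>
    have : ⟪x 0, x 0⟫ = 1 := by rw [real_inner_self_eq_norm_sq, hx]; norm_num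
    simp [this, hx, Real.arccos_one]
  | succ m ih =>
    rw [Finset.sum_range_succ]
    calc Real.arccos ⟪x 0, x (m + 1)⟫
        ≤ Real.arccos ⟪x 0, x m⟫ + Real.arccos ⟪x m, x (m + 1)⟫ :=
          arccos_inner_triangle (hx 0) (hx m) (hx (m + 1))
      _ ≤ _ := add_le_add_left ih _

/-- The spherical distance between the endpoints of a continuous spherical curve is at
most its (chordal) variation. -/
lemma arccos_le_eVariationOn {Γ : ℝ → E} {a b : ℝ} (hab : a ≤ b)
    (hΓ : ContinuousOn Γ (Icc a b)) (hunit : ∀ t ∈ Icc a b, ‖Γ t‖ = 1) :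
    ENNReal.ofReal (Real.arccos ⟪Γ a, Γ b⟫) ≤ eVariationOn Γ (Icc a b) := by
  by_cases hT : eVariationOn Γ (Icc a b) = ⊤
  · rw [hT]; exact le_top
  set V := (eVariationOn Γ (Icc a b)).toReal with hV
  have hV0 : 0 ≤ V := ENNReal.toReal_nonneg
  rw [ENNReal.ofReal_le_iff_le_toReal hT, ← hV]
  have claim : ∀ t : ℝ, 0 < t → t ≤ 1 → Real.arccos ⟪Γ a, Γ b⟫ ≤ t / Real.sin t * V := by
    intro t ht0 ht1
    have htπ : t ≤ π / 2 := le_trans ht1 (by linarith [Real.pi_gt_three])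
    have hst : 0 < Real.sin t :=
      Real.sin_pos_of_pos_of_lt_pi ht0 (by linarith [Real.pi_gt_three])
    obtain ⟨δ, hδ0, hδ⟩ : ∃ δ > 0, ∀ x ∈ Icc a b, ∀ y ∈ Icc a b,
        dist x y ≤ δ → dist (Γ x) (Γ y) ≤ 2 * Real.sin t := by
      rcases Metric.uniformContinuousOn_iff_le.1
        (isCompact_Icc.uniformContinuousOn_of_continuous hΓ) (2 * Real.sin t)
        (by positivity) with ⟨δ, δ0, hh⟩
      exact ⟨δ, δ0, fun x hx y hy hxy => hh x hx y hy hxy⟩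
    obtain ⟨n₀, hn₀⟩ := exists_nat_gt ((b - a) / δ)
    set n := n₀ + 1 with hn
    have hnpos : (0:ℝ) < n := by positivity
    have hstep_le : (b - a) / n ≤ δ := by
      rw [div_le_iff₀ hnpos]
      have h1 : (b - a) / δ < (n:ℝ) := by
        refine hn₀.trans_le ?_
        exact_mod_cast Nat.le_succ n₀
      rw [div_lt_iff₀ hδ0] at h1
      linarith
    have hstep0 : 0 ≤ (b - a) / n := by
      apply div_nonneg (by linarith) hnpos.le
    set u : ℕ → ℝ := fun i => a + (min i n : ℕ) * ((b - a) / n) with hu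
    have hmono : Monotone u := by
      intro i j hij
      have : (min i n : ℕ) ≤ (min j n : ℕ) := min_le_min hij le_rfl
      have : ((min i n : ℕ) : ℝ) ≤ ((min j n : ℕ) : ℝ) := Nat.cast_le.2 this
      simp only [hu]
      nlinarith
    have hmem : ∀ i, u i ∈ Icc a b := by
      intro i
      constructor
      · simp only [hu]
        nlinarith [(Nat.cast_nonneg (min i n) : (0:ℝ) ≤ ((min i n : ℕ) : ℝ)), hstep0]
      · simp only [hu]
        have h1 : ((min i n : ℕ) : ℝ) ≤ (n : ℝ) := Nat.cast_le.2 (min_le_right _ _)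
        have h2 : ((min i n : ℕ) : ℝ) * ((b - a) / n) ≤ (n:ℝ) * ((b - a) / n) := by
          nlinarith
        have h3 : (n:ℝ) * ((b - a) / n) = b - a := by field_simp
        linarith
    have hu0 : u 0 = a := by simp [hu]
    have hun : u n = b := by
      simp only [hu, min_self]
      have : (n:ℝ) * ((b - a) / n) = b - a := by field_simp
      linarith
    have hstep : ∀ i, dist (u (i+1)) (u i) ≤ δ := by
      intro i
      have h1 : (min i n : ℕ) ≤ min (i+1) n := min_le_min (Nat.le_succ i) le_rfl
      have h2 : min (i+1) n ≤ min i n + 1 := by omega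
      have h1' : ((min i n : ℕ) : ℝ) ≤ ((min (i+1) n : ℕ) : ℝ) := Nat.cast_le.2 h1
      have h2' : ((min (i+1) n : ℕ) : ℝ) ≤ ((min i n : ℕ) : ℝ) + 1 := by
        exact_mod_cast Nat.cast_le.2 h2
      rw [Real.dist_eq, abs_of_nonneg (by simp only [hu]; nlinarith)]
      simp only [hu]
      have : ((min (i+1) n : ℕ) : ℝ) * ((b - a)/n) - ((min i n : ℕ) : ℝ) * ((b - a)/n)
          ≤ 1 * ((b - a)/n) := by nlinarith
      have hle : a + ((min (i+1) n : ℕ) : ℝ) * ((b - a)/n)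
          - (a + ((min i n : ℕ) : ℝ) * ((b - a)/n)) ≤ (b - a)/n := by linarith
      linarith [hstep_le]
    have hunit' : ∀ i, ‖Γ (u i)‖ = 1 := fun i => hunit _ (hmem i)
    have chain := arccos_chain (x := fun i => Γ (u i)) hunit' n
    have seg : ∀ i ∈ Finset.range n, Real.arccos ⟪Γ (u i), Γ (u (i+1))⟫
        ≤ t / Real.sin t * ‖Γ (u i) - Γ (u (i+1))‖ := by
      intro i _
      apply arccos_le_of_chord (hunit' i) (hunit' (i+1)) ht0 htπ
      rw [← dist_eq_norm]
      exact hδ _ (hmem i) _ (hmem (i+1)) (by rw [dist_comm]; exact hstep i)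
    have sumdist : ∑ i ∈ Finset.range n, dist (Γ (u (i+1))) (Γ (u i)) ≤ V := by
      rw [← ENNReal.ofReal_le_iff_le_toReal hT]
      calc ENNReal.ofReal (∑ i ∈ Finset.range n, dist (Γ (u (i+1))) (Γ (u i)))
          = ∑ i ∈ Finset.range n, ENNReal.ofReal (dist (Γ (u (i+1))) (Γ (u i))) :=
            ENNReal.ofReal_sum_of_nonneg (fun i _ => dist_nonneg)
        _ = ∑ i ∈ Finset.range n, edist (Γ (u (i+1))) (Γ (u i)) := by
            simp [edist_dist]
        _ ≤ _ := eVariationOn.sum_le (f := Γ) (n := n) hmono hmem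
    calc Real.arccos ⟪Γ a, Γ b⟫ = Real.arccos ⟪Γ (u 0), Γ (u n)⟫ := by rw [hu0, hun]
      _ ≤ ∑ i ∈ Finset.range n, Real.arccos ⟪Γ (u i), Γ (u (i+1))⟫ := chain
      _ ≤ ∑ i ∈ Finset.range n, t / Real.sin t * ‖Γ (u i) - Γ (u (i+1))‖ :=
          Finset.sum_le_sum seg
      _ = t / Real.sin t * ∑ i ∈ Finset.range n, dist (Γ (u (i+1))) (Γ (u i)) := by
          rw [Finset.mul_sum]
          congr 1; funext i
          rw [dist_eq_norm, norm_sub_rev]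
      _ ≤ t / Real.sin t * V := by
          apply mul_le_mul_of_nonneg_left sumdist (by positivity)
  apply le_of_forall_pos_le_add
  intro η hη
  set t := min 1 (Real.sqrt (η / (V + 1))) with htdef
  have ht0 : 0 < t := lt_min one_pos (Real.sqrt_pos.2 (by positivity))
  have ht1 : t ≤ 1 := min_le_left _ _
  have hts : t ^ 2 ≤ η / (V + 1) := by
    have h1 : t ≤ Real.sqrt (η / (V + 1)) := min_le_right _ _
    calc t ^ 2 ≤ Real.sqrt (η / (V + 1)) ^ 2 := by nlinarith
      _ = η / (V + 1) := Real.sq_sqrt (by positivity)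
  have hst : 0 < Real.sin t :=
    Real.sin_pos_of_pos_of_lt_pi ht0 (by nlinarith [Real.pi_gt_three])
  have hη' : 0 < η / (V + 1) := by positivity
  have hsin : t / Real.sin t ≤ 1 + η / (V + 1) := by
    have hcube := Real.sin_gt_sub_cube ht0
    rw [div_le_iff₀ hst]
    have ht2 : t ^ 2 ≤ 1 := by nlinarith
    have hmul : (η / (V + 1)) * t ^ 2 ≤ (η / (V + 1)) * 1 :=
      mul_le_mul_of_nonneg_left ht2 hη'.le
    have key : 1 ≤ (1 + η / (V + 1)) * (1 - t ^ 2 / 4) := by nlinarith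
    have h2 : t * 1 ≤ t * ((1 + η / (V + 1)) * (1 - t ^ 2 / 4)) :=
      mul_le_mul_of_nonneg_left key ht0.le
    nlinarith
  have hc := claim t ht0 ht1
  have h3 : t / Real.sin t * V ≤ (1 + η / (V + 1)) * V :=
    mul_le_mul_of_nonneg_right hsin hV0
  have h4 : η / (V + 1) * V ≤ η := by
    rw [div_mul_eq_mul_div, div_le_iff₀ (by positivity)]
    nlinarith
  nlinarith

/-- Additivity of variation over adjacent intervals. -/
lemma evar_Icc_add (f : ℝ → E) {a b c : ℝ} (hab : a ≤ b) (hbc : b ≤ c) :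
    eVariationOn f (Icc a b) + eVariationOn f (Icc b c) = eVariationOn f (Icc a c) := by
  have h := eVariationOn.Icc_add_Icc f (s := Icc a c) hab hbc ⟨hab, hbc⟩
  rw [Set.Icc_inter_Icc, Set.Icc_inter_Icc, Set.Icc_inter_Icc] at h
  simpa [sup_idem, inf_idem, sup_eq_right.mpr hab, inf_eq_right.mpr hbc] using h

/-- Near the right endpoint, a continuous function of bounded variation has small
variation on a short terminal interval. -/
lemma evar_left {f : ℝ → E} (hf : Continuous f) {a s : ℝ} (has : a < s)
    (hfin : eVariationOn f (Icc a s) ≠ ⊤) {ε : ℝ} (hε : 0 < ε) :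
    ∃ t, t ∈ Ico a s ∧ eVariationOn f (Icc t s) ≤ ENNReal.ofReal ε := by
  by_cases h0 : eVariationOn f (Icc a s) ≤ ENNReal.ofReal ε
  · exact ⟨a, ⟨le_rfl, has⟩, h0⟩
  push_neg at h0
  obtain ⟨δ, hδ0, hδ⟩ : ∃ δ > 0, ∀ x, dist x s < δ → dist (f x) (f s) ≤ ε / 4 := by
    rcases Metric.continuous_iff.1 hf s (ε / 4) (by positivity) with ⟨δ, δ0, hd⟩
    exact ⟨δ, δ0, fun x hx => (hd x hx).le⟩
  have hne : eVariationOn f (Icc a s) ≠ 0 :=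
    ((ENNReal.ofReal_pos.2 hε).trans h0).ne'
  have hsub : eVariationOn f (Icc a s) - ENNReal.ofReal (ε / 4)
      < eVariationOn f (Icc a s) :=
    ENNReal.sub_lt_self hfin hne (ENNReal.ofReal_pos.2 (by positivity)).ne'
  have h' : eVariationOn f (Icc a s) - ENNReal.ofReal (ε / 4) <
      ⨆ p : ℕ × { u : ℕ → ℝ // Monotone u ∧ ∀ i, u i ∈ Icc a s },
        ∑ i ∈ Finset.range p.1, edist (f (p.2.1 (i + 1))) (f (p.2.1 i)) := hsub
  obtain ⟨⟨n, ⟨u, hu, us⟩⟩, hsum⟩ := lt_iSup_iff.mp h'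
  simp only at hsum
  set t' := Finset.fold max (max a (s - δ / 2))
    (fun i => if u i < s then u i else a) (Finset.range (n + 1)) with ht'
  have hbase_le : max a (s - δ / 2) ≤ t' := by
    rw [ht', Finset.le_fold_max]
    exact Or.inl le_rfl
  have hta : a ≤ t' := le_trans (le_max_left _ _) hbase_le
  have htδ : s - t' ≤ δ / 2 := by
    have := le_trans (le_max_right _ _) hbase_le
    linarith
  have hts : t' < s := by
    rw [ht', Finset.fold_max_lt]
    refine ⟨max_lt has (by linarith), fun i _ => ?_⟩
    split_ifs with h
    · exact h
    · exact has
  have hkey : ∀ i, i ≤ n → t' < u i → u i = s := by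
    intro i hin hti
    rcases lt_or_eq_of_le (us i).2 with h | h
    · exfalso
      have hle : u i ≤ t' := by
        rw [ht', Finset.le_fold_max]
        refine Or.inr ⟨i, Finset.mem_range.2 (by omega), ?_⟩
        rw [if_pos h]
      exact absurd hti (not_lt.2 hle)
    · exact h
  set w : ℕ → ℝ := fun i => min (u i) t' with hw
  have hw_mono : Monotone w := fun i j h => min_le_min (hu h) le_rfl
  have hw_mem : ∀ i, w i ∈ Icc a t' := fun i => ⟨le_min (us i).1 hta, min_le_right _ _⟩
  have hft : edist (f t') (f s) ≤ ENNReal.ofReal (ε / 4) := by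
    rw [edist_dist]
    apply ENNReal.ofReal_le_ofReal
    apply hδ
    rw [Real.dist_eq, abs_of_nonpos (by linarith)]
    linarith
  have hsum_le : ∑ i ∈ Finset.range n, edist (f (u (i + 1))) (f (u i)) ≤
      (∑ i ∈ Finset.range n, edist (f (w (i + 1))) (f (w i))) + ENNReal.ofReal (ε / 4) := by
    rcases em (∃ i, t' < u i) with hex | hex
    · set k := Nat.find hex with hk
      have hk_spec : t' < u k := Nat.find_spec hex
      have hk_min : ∀ i, i < k → u i ≤ t' := fun i hi => not_lt.1 (Nat.find_min hex hi)
      have hterm : ∀ i ∈ Finset.range n, edist (f (u (i + 1))) (f (u i)) ≤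
          edist (f (w (i + 1))) (f (w i)) +
            (if i + 1 = k then ENNReal.ofReal (ε / 4) else 0) := by
        intro i hi
        have hin : i + 1 ≤ n := Finset.mem_range.1 hi
        rcases lt_trichotomy (i + 1) k with h | h | h
        · have h1 : u (i + 1) ≤ t' := hk_min _ h
          have h2 : u i ≤ t' := le_trans (hu (Nat.le_succ i)) h1
          rw [if_neg h.ne, show w (i + 1) = u (i + 1) from min_eq_left h1,
            show w i = u i from min_eq_left h2, add_zero]
        · have hus : u (i + 1) = s := hkey (i + 1) hin (h ▸ hk_spec)
          have h2 : u i ≤ t' := hk_min i (by omega)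
          rw [if_pos h, show w i = u i from min_eq_left h2,
            show w (i + 1) = t' from by rw [hw]; simp only; rw [hus]; exact min_eq_right hts.le,
            hus]
          calc edist (f s) (f (u i)) ≤ edist (f s) (f t') + edist (f t') (f (u i)) :=
                edist_triangle _ _ _
            _ = edist (f t') (f (u i)) + edist (f t') (f s) := by
                rw [edist_comm (f s) (f t'), add_comm]
            _ ≤ edist (f t') (f (u i)) + ENNReal.ofReal (ε / 4) := by
                exact add_le_add_right hft _
        · have hk_le_i : k ≤ i := by omega
          have hi1 : u i = s := hkey i (by omega) (lt_of_lt_of_le hk_spec (hu hk_le_i))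
          have hi2 : u (i + 1) = s :=
            hkey (i + 1) hin (lt_of_lt_of_le hk_spec (hu (by omega)))
          rw [hi1, hi2]
          simp
      calc ∑ i ∈ Finset.range n, edist (f (u (i + 1))) (f (u i))
          ≤ ∑ i ∈ Finset.range n, (edist (f (w (i + 1))) (f (w i)) +
              (if i + 1 = k then ENNReal.ofReal (ε / 4) else 0)) :=
            Finset.sum_le_sum hterm
        _ = (∑ i ∈ Finset.range n, edist (f (w (i + 1))) (f (w i))) +
              ∑ i ∈ Finset.range n, (if i + 1 = k then ENNReal.ofReal (ε / 4) else 0) :=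
            Finset.sum_add_distrib
        _ ≤ _ := by
            apply add_le_add_right
            have hite : ∀ i ∈ Finset.range n,
                (if i + 1 = k then ENNReal.ofReal (ε / 4) else 0) ≤
                (if i = k - 1 then ENNReal.ofReal (ε / 4) else 0) := by
              intro i _
              split_ifs with h1 h2
              · exact le_rfl
              · exfalso; omega
              · exact zero_le
              · exact le_rfl
            calc ∑ i ∈ Finset.range n, (if i + 1 = k then ENNReal.ofReal (ε / 4) else 0)
                ≤ ∑ i ∈ Finset.range n, (if i = k - 1 then ENNReal.ofReal (ε / 4) else 0) :=
                  Finset.sum_le_sum hite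
              _ = if k - 1 ∈ Finset.range n then ENNReal.ofReal (ε / 4) else 0 :=
                  Finset.sum_ite_eq' (Finset.range n) (k - 1)
                    (fun _ => ENNReal.ofReal (ε / 4))
              _ ≤ ENNReal.ofReal (ε / 4) := by split_ifs <;> simp
    · push_neg at hex
      have heq : ∀ i, w i = u i := fun i => min_eq_left (hex i)
      apply le_trans _ (le_add_right le_rfl)
      apply le_of_eq
      apply Finset.sum_congr rfl
      intro i _
      rw [heq, heq]
  have hw_sum : ∑ i ∈ Finset.range n, edist (f (w (i + 1))) (f (w i)) ≤
      eVariationOn f (Icc a t') := eVariationOn.sum_le (f := f) (n := n) hw_mono hw_mem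
  have h1 : eVariationOn f (Icc a s) - ENNReal.ofReal (ε / 4) ≤
      eVariationOn f (Icc a t') + ENNReal.ofReal (ε / 4) :=
    le_trans hsum.le (hsum_le.trans (add_le_add_left hw_sum _))
  have hV2 : eVariationOn f (Icc a s) ≤
      eVariationOn f (Icc a t') + (ENNReal.ofReal (ε / 4) + ENNReal.ofReal (ε / 4)) := by
    have := tsub_le_iff_right.mp h1
    calc eVariationOn f (Icc a s) ≤
        eVariationOn f (Icc a t') + ENNReal.ofReal (ε / 4) + ENNReal.ofReal (ε / 4) := this
      _ = _ := by rw [add_assoc]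
  have hadd : eVariationOn f (Icc a t') + eVariationOn f (Icc t' s) =
      eVariationOn f (Icc a s) := evar_Icc_add f hta hts.le
  refine ⟨t', ⟨hta, hts⟩, ?_⟩
  have hfin' : eVariationOn f (Icc a t') ≠ ⊤ :=
    ne_top_of_le_ne_top hfin (eVariationOn.mono f (Icc_subset_Icc le_rfl hts.le))
  rw [← hadd] at hV2
  have hle := (ENNReal.add_le_add_iff_left hfin').1 hV2
  refine hle.trans ?_
  rw [← ENNReal.ofReal_add (by positivity) (by positivity)]
  exact ENNReal.ofReal_le_ofReal (by linarith)

/-- Near the left endpoint, symmetric version of `evar_left`. -/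
lemma evar_right {f : ℝ → E} (hf : Continuous f) {s b : ℝ} (hsb : s < b)
    (hfin : eVariationOn f (Icc s b) ≠ ⊤) {ε : ℝ} (hε : 0 < ε) :
    ∃ t, t ∈ Ioc s b ∧ eVariationOn f (Icc s t) ≤ ENNReal.ofReal ε := by
  set φ : ℝ → ℝ := fun x => s + b - x with hφdef
  have hcomp : ∀ p q : ℝ, eVariationOn (f ∘ φ) (Icc p q) =
      eVariationOn f (Icc (s + b - q) (s + b - p)) := by
    intro p q
    rw [eVariationOn.comp_eq_of_antitoneOn f φ
      (fun x _ y _ hxy => by simp only [hφdef]; linarith)]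
    congr 1
    have : φ = fun x => (s + b) - x := rfl
    rw [this, Set.image_const_sub_Icc]
  have hfin' : eVariationOn (f ∘ φ) (Icc s b) ≠ ⊤ := by
    rw [hcomp s b]
    have e1 : s + b - b = s := by ring
    have e2 : s + b - s = b := by ring
    rw [e1, e2]; exact hfin
  have hφc : Continuous φ := by
    rw [hφdef]; exact continuous_const.sub continuous_id
  obtain ⟨t, ⟨hts, htb⟩, hle⟩ := evar_left (hf.comp hφc) hsb hfin' hε
  refine ⟨s + b - t, ⟨by linarith, by linarith⟩, ?_⟩
  rw [hcomp t b] at hle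
  have e1 : s + b - b = s := by ring
  rw [e1] at hle
  exact hle

/-- A continuous curve of finite variation can be split into two halves of equal
variation budget. -/
lemma evar_bisect {f : ℝ → E} (hf : Continuous f)
    (hfin : eVariationOn f (Icc (0:ℝ) 1) ≠ ⊤) :
    ∃ t₀ ∈ Icc (0:ℝ) 1,
      eVariationOn f (Icc 0 t₀) ≤ eVariationOn f (Icc (0:ℝ) 1) / 2 ∧
      eVariationOn f (Icc t₀ 1) ≤ eVariationOn f (Icc (0:ℝ) 1) / 2 := by
  set Var := eVariationOn f (Icc (0:ℝ) 1) with hVar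
  set S := {t : ℝ | t ∈ Icc (0:ℝ) 1 ∧ eVariationOn f (Icc 0 t) ≤ Var / 2} with hS
  have h0S : (0:ℝ) ∈ S := by
    refine ⟨⟨le_rfl, zero_le_one⟩, ?_⟩
    rw [Set.Icc_self]
    rw [eVariationOn.subsingleton f subsingleton_singleton]
    exact zero_le
  have hbdd : BddAbove S := ⟨1, fun t ht => ht.1.2⟩
  set t₀ := sSup S with ht₀def
  have ht₀mem : t₀ ∈ Icc (0:ℝ) 1 :=
    ⟨le_csSup hbdd h0S, csSup_le ⟨0, h0S⟩ fun t ht => ht.1.2⟩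
  have hlt : ∀ t, 0 ≤ t → t < t₀ → eVariationOn f (Icc 0 t) ≤ Var / 2 := by
    intro t ht htlt
    obtain ⟨r, hrS, hrt⟩ := exists_lt_of_lt_csSup ⟨0, h0S⟩ htlt
    exact (eVariationOn.mono f (Icc_subset_Icc le_rfl hrt.le)).trans hrS.2
  have hfin1 : eVariationOn f (Icc 0 t₀) ≠ ⊤ :=
    ne_top_of_le_ne_top hfin (eVariationOn.mono f (Icc_subset_Icc le_rfl ht₀mem.2))
  refine ⟨t₀, ht₀mem, ?_, ?_⟩
  · rcases eq_or_lt_of_le ht₀mem.1 with h | h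
    · rw [← h, Set.Icc_self, eVariationOn.subsingleton f subsingleton_singleton]
      exact zero_le
    · apply ENNReal.le_of_forall_pos_le_add
      intro η hη _
      obtain ⟨t, ⟨ht0, htlt⟩, hsmall⟩ := evar_left hf h hfin1 (ε := (η:ℝ))
        (by exact_mod_cast hη)
      rw [← evar_Icc_add f ht0 htlt.le]
      refine add_le_add (hlt t ht0 htlt) ?_
      rwa [ENNReal.ofReal_coe_nnreal] at hsmall
  · rcases eq_or_lt_of_le ht₀mem.2 with h | h
    · rw [h, Set.Icc_self, eVariationOn.subsingleton f subsingleton_singleton]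
      exact zero_le
    · apply ENNReal.le_of_forall_pos_le_add
      intro η hη _
      have hfin2 : eVariationOn f (Icc t₀ 1) ≠ ⊤ :=
        ne_top_of_le_ne_top hfin (eVariationOn.mono f (Icc_subset_Icc ht₀mem.1 le_rfl))
      obtain ⟨t, ⟨htgt, htle⟩, hsmall⟩ := evar_right hf h hfin2 (ε := (η:ℝ))
        (by exact_mod_cast hη)
      have ht0' : (0:ℝ) ≤ t := le_trans ht₀mem.1 htgt.le
      have htS : t ∉ S := fun hts => absurd (le_csSup hbdd hts) (not_le.2 htgt)
      have hVt : Var / 2 < eVariationOn f (Icc 0 t) := by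
        by_contra hcon
        push_neg at hcon
        exact htS ⟨⟨ht0', htle⟩, hcon⟩
      have ht1 : eVariationOn f (Icc t 1) ≤ Var / 2 := by
        by_contra hcon
        push_neg at hcon
        have hadd := evar_Icc_add f ht0' htle
        have := ENNReal.add_lt_add hVt hcon
        rw [ENNReal.add_halves, hadd] at this
        exact lt_irrefl _ this
      calc eVariationOn f (Icc t₀ 1)
          = eVariationOn f (Icc t₀ t) + eVariationOn f (Icc t 1) :=
            (evar_Icc_add f htgt.le htle).symm
        _ ≤ ENNReal.ofReal (η:ℝ) + Var / 2 := add_le_add hsmall ht1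
        _ = Var / 2 + η := by rw [add_comm, ENNReal.ofReal_coe_nnreal]

/-- Horn's lemma (chordal version): a closed spherical curve of length `< 2π` lies in an
open half-space. -/
lemma horn_lemma {Γ : ℝ → E} (hΓ : Continuous Γ) (hunit : ∀ t, ‖Γ t‖ = 1)
    (hclosed : Γ 1 = Γ 0) (hvar : eVariationOn Γ (Icc (0:ℝ) 1) < ENNReal.ofReal (2 * π)) :
    ∃ u : E, ∀ t ∈ Icc (0:ℝ) 1, 0 < ⟪Γ t, u⟫ := by
  have hfin : eVariationOn Γ (Icc (0:ℝ) 1) ≠ ⊤ := hvar.ne_top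
  obtain ⟨t₀, ht₀, h1, h2⟩ := evar_bisect hΓ hfin
  have hhalf : eVariationOn Γ (Icc (0:ℝ) 1) / 2 < ENNReal.ofReal π := by
    rw [ENNReal.div_lt_iff (Or.inl two_ne_zero) (Or.inl ENNReal.ofNat_ne_top)]
    have he : ENNReal.ofReal (2 * π) = ENNReal.ofReal π * 2 := by
      rw [mul_comm, ENNReal.ofReal_mul Real.pi_pos.le]
      norm_num
    rw [← he]
    exact hvar
  have hG : ∀ a b : ℝ, 0 ≤ a → a ≤ b → b ≤ 1 →
      ENNReal.ofReal (Real.arccos ⟪Γ a, Γ b⟫) ≤ eVariationOn Γ (Icc a b) := by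
    intro a b ha hab hb
    exact arccos_le_eVariationOn hab (hΓ.continuousOn) (fun t _ => hunit t)
  set p := Γ 0 with hp
  set q := Γ t₀ with hq
  set u := p + q with hu
  have harc_pq : ENNReal.ofReal (Real.arccos ⟪p, q⟫) ≤ eVariationOn Γ (Icc (0:ℝ) 1) / 2 :=
    (hG 0 t₀ le_rfl ht₀.1 ht₀.2).trans h1
  have hpq_lt : Real.arccos ⟪p, q⟫ < π := by
    have := harc_pq.trans_lt hhalf
    exact (ENNReal.ofReal_lt_ofReal_iff Real.pi_pos).1 this
  have hpq : -1 < ⟪p, q⟫ := by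
    by_contra hcon
    push_neg at hcon
    rw [Real.arccos_eq_pi.2 hcon] at hpq_lt
    exact lt_irrefl _ hpq_lt
  have hu0 : 0 < ⟪Γ 0, u⟫ := by
    rw [hu, inner_add_right, ← hp, real_inner_self_eq_norm_sq, hunit 0]
    norm_num
    linarith
  have hne : ∀ t ∈ Icc (0:ℝ) 1, ⟪Γ t, u⟫ ≠ 0 := by
    rintro t ⟨ht0', ht1'⟩ hzero
    have hxpq : ⟪Γ t, q⟫ = - ⟪Γ t, p⟫ := by
      have hsum : ⟪Γ t, p⟫ + ⟪Γ t, q⟫ = 0 := by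
        rw [← inner_add_right]; exact hzero
      linarith
    have hsumπ : Real.arccos ⟪Γ t, p⟫ + Real.arccos ⟪Γ t, q⟫ = π := by
      rw [hxpq, Real.arccos_neg]; ring
    rcases le_total t t₀ with h | h
    · have g1 := hG 0 t le_rfl ht0' (le_trans h ht₀.2)
      have g2 := hG t t₀ ht0' h ht₀.2
      have hππ : ENNReal.ofReal π ≤ eVariationOn Γ (Icc (0:ℝ) 1) / 2 := by
        calc ENNReal.ofReal π
            = ENNReal.ofReal (Real.arccos ⟪Γ 0, Γ t⟫ + Real.arccos ⟪Γ t, Γ t₀⟫) := by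
              have c1 : ⟪Γ 0, Γ t⟫ = ⟪Γ t, p⟫ := real_inner_comm _ _
              have c2 : ⟪Γ t, Γ t₀⟫ = ⟪Γ t, q⟫ := rfl
              rw [c1, c2, hsumπ]
          _ = ENNReal.ofReal (Real.arccos ⟪Γ 0, Γ t⟫) +
              ENNReal.ofReal (Real.arccos ⟪Γ t, Γ t₀⟫) :=
              ENNReal.ofReal_add (Real.arccos_nonneg _) (Real.arccos_nonneg _)
          _ ≤ eVariationOn Γ (Icc 0 t) + eVariationOn Γ (Icc t t₀) := add_le_add g1 g2
          _ = eVariationOn Γ (Icc 0 t₀) := evar_Icc_add Γ ht0' h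
          _ ≤ _ := h1
      exact absurd (hππ.trans_lt hhalf) (lt_irrefl _)
    · have g1 := hG t₀ t ht₀.1 h ht1'
      have g2 := hG t 1 (le_trans ht₀.1 h) ht1' le_rfl
      have hππ : ENNReal.ofReal π ≤ eVariationOn Γ (Icc (0:ℝ) 1) / 2 := by
        calc ENNReal.ofReal π
            = ENNReal.ofReal (Real.arccos ⟪Γ t₀, Γ t⟫ + Real.arccos ⟪Γ t, Γ 1⟫) := by
              have c1 : ⟪Γ t₀, Γ t⟫ = ⟪Γ t, q⟫ := real_inner_comm _ _
              have c2 : ⟪Γ t, Γ 1⟫ = ⟪Γ t, p⟫ := by rw [hclosed]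
              rw [c1, c2, add_comm, hsumπ]
          _ = ENNReal.ofReal (Real.arccos ⟪Γ t₀, Γ t⟫) +
              ENNReal.ofReal (Real.arccos ⟪Γ t, Γ 1⟫) :=
              ENNReal.ofReal_add (Real.arccos_nonneg _) (Real.arccos_nonneg _)
          _ ≤ eVariationOn Γ (Icc t₀ t) + eVariationOn Γ (Icc t 1) := add_le_add g1 g2
          _ = eVariationOn Γ (Icc t₀ 1) := evar_Icc_add Γ h ht1'
          _ ≤ _ := h2
      exact absurd (hππ.trans_lt hhalf) (lt_irrefl _)
  refine ⟨u, fun t ht => ?_⟩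
  by_contra hcon
  push_neg at hcon
  have hcon' : ⟪Γ t, u⟫ < 0 := lt_of_le_of_ne hcon (hne t ht)
  have hcont : ContinuousOn (fun r => ⟪Γ r, u⟫) (Icc 0 t) :=
    (hΓ.inner continuous_const).continuousOn
  have hmem : (0:ℝ) ∈ Icc ⟪Γ t, u⟫ ⟪Γ 0, u⟫ := ⟨hcon'.le, hu0.le⟩
  obtain ⟨c, hc_mem, hc0⟩ := intermediate_value_Icc' ht.1 hcont hmem
  exact hne c (⟨hc_mem.1, le_trans hc_mem.2 ht.2⟩) hc0

/-- A closed curve of length `< 2π` keeping distance `≥ 1` from a point `z` is strictly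
separated from `z` by a hyperplane. -/
lemma sep_of_short {γ : ℝ → E} (hγ : Continuous γ) (hclosed : γ 1 = γ 0) {z : E}
    (hz : ∀ t, 1 ≤ dist (γ t) z)
    (hvar : eVariationOn γ (Icc (0:ℝ) 1) < ENNReal.ofReal (2 * π)) :
    ∃ u : E, ∀ t ∈ Icc (0:ℝ) 1, 0 < ⟪γ t - z, u⟫ := by
  have hnorm : ∀ t, 1 ≤ ‖γ t - z‖ := fun t => by
    rw [← dist_eq_norm]; exact hz t
  have hne0 : ∀ t, ‖γ t - z‖ ≠ 0 := fun t => by linarith [hnorm t]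
  set Γ : ℝ → E := fun t => ‖γ t - z‖⁻¹ • (γ t - z) with hΓdef
  have hΓc : Continuous Γ :=
    (((hγ.sub continuous_const).norm).inv₀ hne0).smul (hγ.sub continuous_const)
  have hΓu : ∀ t, ‖Γ t‖ = 1 := fun t => by
    rw [hΓdef]
    simp only
    rw [norm_smul, norm_inv, norm_norm, inv_mul_cancel₀ (hne0 t)]
  have hΓcl : Γ 1 = Γ 0 := by
    rw [hΓdef]; simp only [hclosed]
  have hlip : LipschitzOnWith 1 (fun x : E => ‖x‖⁻¹ • x) {x : E | 1 ≤ ‖x‖} := by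
    rw [lipschitzOnWith_iff_dist_le_mul]
    intro x hx y hy
    rw [NNReal.coe_one, one_mul, dist_eq_norm, dist_eq_norm]
    have hx1 : 1 ≤ ‖x‖ := hx
    have hy1 : 1 ≤ ‖y‖ := hy
    have hx0 : ‖x‖ ≠ 0 := by linarith
    have hy0 : ‖y‖ ≠ 0 := by linarith
    have hsq : ‖‖x‖⁻¹ • x - ‖y‖⁻¹ • y‖ ^ 2 ≤ ‖x - y‖ ^ 2 := by
      rw [norm_sub_sq_real, norm_sub_sq_real]
      rw [real_inner_smul_left, real_inner_smul_right]
      rw [norm_smul, norm_smul, norm_inv, norm_inv, norm_norm, norm_norm,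
        inv_mul_cancel₀ hx0, inv_mul_cancel₀ hy0]
      set a := ‖x‖
      set b := ‖y‖
      set c := ⟪x, y⟫ with hc
      have habs : |c| ≤ a * b := abs_real_inner_le_norm x y
      have hab1 : (1:ℝ) ≤ a * b := one_le_mul_of_one_le_of_one_le hx1 hy1
      have hab0 : (0:ℝ) < a * b := by linarith
      have e1 : a⁻¹ * (b⁻¹ * c) * (a * b) = c := by field_simp
      have hX1 : a⁻¹ * (b⁻¹ * c) ≤ 1 := by
        have h2 : a⁻¹ * (b⁻¹ * c) * (a * b) ≤ 1 * (a * b) := by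
          rw [e1, one_mul]; exact (abs_le.1 habs).2
        exact le_of_mul_le_mul_right h2 hab0
      nlinarith [sq_nonneg (a - b), mul_nonneg (sub_nonneg.2 hab1) (sub_nonneg.2 hX1),
        e1, (abs_le.1 habs).1, (abs_le.1 habs).2]
    have := Real.sqrt_le_sqrt hsq
    rwa [Real.sqrt_sq (norm_nonneg _), Real.sqrt_sq (norm_nonneg _)] at this
  have hmaps : MapsTo (fun t => γ t - z) (Icc (0:ℝ) 1) {x : E | 1 ≤ ‖x‖} :=
    fun t _ => hnorm t
  have hvar2 : eVariationOn Γ (Icc (0:ℝ) 1) ≤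
      eVariationOn (fun t => γ t - z) (Icc (0:ℝ) 1) := by
    have h := hlip.comp_eVariationOn_le hmaps
    rw [ENNReal.coe_one, one_mul] at h; exact h
  have hvar3 : eVariationOn (fun t => γ t - z) (Icc (0:ℝ) 1) =
      eVariationOn γ (Icc (0:ℝ) 1) := by
    apply le_antisymm
    · have lips : LipschitzOnWith 1 (fun x : E => x - z) univ := by
        apply LipschitzWith.lipschitzOnWith
        apply LipschitzWith.of_dist_le_mul
        intro x y
        rw [NNReal.coe_one, one_mul, dist_sub_right]
      have h := lips.comp_eVariationOn_le (s := Icc (0:ℝ) 1) (mapsTo_univ γ _)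
      rw [ENNReal.coe_one, one_mul] at h; exact h
    · have lips : LipschitzOnWith 1 (fun x : E => x + z) univ := by
        apply LipschitzWith.lipschitzOnWith
        apply LipschitzWith.of_dist_le_mul
        intro x y
        rw [NNReal.coe_one, one_mul, dist_add_right]
      have h := lips.comp_eVariationOn_le (s := Icc (0:ℝ) 1)
        (mapsTo_univ (fun t => γ t - z) _)
      have hfun : ((fun x : E => x + z) ∘ fun t => γ t - z) = γ := by
        funext t; simp
      rw [hfun] at h
      simpa using h
  obtain ⟨u, hu⟩ := horn_lemma hΓc hΓu hΓcl
    (lt_of_le_of_lt (hvar2.trans (le_of_eq hvar3)) hvar)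
  refine ⟨u, fun t ht => ?_⟩
  have h := hu t ht
  have heq : ⟪γ t - z, u⟫ = ‖γ t - z‖ * ⟪Γ t, u⟫ := by
    have hre : (‖γ t - z‖) • Γ t = γ t - z := by
      rw [hΓdef]
      simp only
      rw [smul_smul, mul_inv_cancel₀ (hne0 t), one_smul]
    rw [show (⟪γ t - z, u⟫:ℝ) = ⟪‖γ t - z‖ • Γ t, u⟫ from by rw [hre],
      real_inner_smul_left]
  rw [heq]
  exact mul_pos (by linarith [hnorm t]) h

end Aux


/-- Original Gehring problem: a closed curve `C₁` keeping distance at least `1` from a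
closed curve `C₂` with which it is topologically linked (i.e. `C₁` is not
null-homotopic in the complement of `C₂`) has length at least `2π`. Curves are
parametrized periodically with period `1`. -/
theorem gehring_problem
    (C₁ C₂ : ℝ → EuclideanSpace ℝ (Fin 3))
    (h₁ : Continuous C₁) (h₂ : Continuous C₂)
    (hper₁ : Function.Periodic C₁ 1) (hper₂ : Function.Periodic C₂ 1)
    (hdist : ∀ s t : ℝ, 1 ≤ dist (C₁ s) (C₂ t))
    (hlink : ¬ ∃ H : ℝ → ℝ → EuclideanSpace ℝ (Fin 3),
      Continuous (Function.uncurry H) ∧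
      (∀ t, H 0 t = C₁ t) ∧
      (∀ s, Function.Periodic (H s) 1) ∧
      (∀ s t, H s t ∉ Set.range C₂) ∧
      (∃ c, ∀ t, H 1 t = c)) :
    ENNReal.ofReal (2 * Real.pi) ≤ eVariationOn C₁ (Set.Icc 0 1) := by
  by_contra hcon
  push_neg at hcon
  have hrange : ∀ t : ℝ, C₁ t ∈ C₁ '' (Icc (0:ℝ) 1) := by
    intro t
    refine ⟨Int.fract t, ⟨Int.fract_nonneg t, (Int.fract_lt_one t).le⟩, ?_⟩
    have := hper₁.sub_int_mul_eq (x := t) ⌊t⌋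
    rw [mul_one] at this
    rw [Int.fract]
    exact this
  set K := convexHull ℝ (C₁ '' (Icc (0:ℝ) 1)) with hK
  by_cases hz : ∃ z ∈ Set.range C₂, z ∈ K
  · obtain ⟨z, ⟨sz, hsz⟩, hzK⟩ := hz
    have hdist' : ∀ t, 1 ≤ dist (C₁ t) z := fun t => by
      rw [← hsz]; exact hdist t sz
    have hclosed : C₁ 1 = C₁ 0 := by
      have := hper₁ 0
      rwa [zero_add] at this
    obtain ⟨u, hu⟩ := sep_of_short h₁ hclosed hdist' hcon
    have hhalf : K ⊆ {x : EuclideanSpace ℝ (Fin 3) | 0 < ⟪x - z, u⟫} := by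
      apply convexHull_min
      · rintro x ⟨t, htmem, rfl⟩
        exact hu t htmem
      · intro x hx y hy a b ha hb hab
        simp only [mem_setOf_eq] at hx hy ⊢
        have hz' : a • z + b • z = z := by
          rw [← add_smul, hab, one_smul]
        have heq : a • x + b • y - z = a • (x - z) + b • (y - z) := by
          have h2 : a • (x - z) + b • (y - z) = a • x + b • y - (a • z + b • z) := by
            rw [smul_sub, smul_sub]; abel
          rw [h2, hz']
        rw [heq, inner_add_left, real_inner_smul_left, real_inner_smul_left]
        rcases lt_or_eq_of_le ha with ha' | ha'
        · exact add_pos_of_pos_of_nonneg (mul_pos ha' hx) (mul_nonneg hb hy.le)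
        · rw [← ha', zero_mul, zero_add]
          have hb1 : b = 1 := by linarith
          rw [hb1, one_mul]
          exact hy
    have := hhalf hzK
    simp only [mem_setOf_eq, sub_self, inner_zero_left] at this
    exact lt_irrefl _ this
  · push_neg at hz
    apply hlink
    set σ : ℝ → ℝ := fun s => min 1 (max 0 s) with hσ
    have hσc : Continuous σ := continuous_const.min (continuous_const.max continuous_id)
    have hσ0 : ∀ s, 0 ≤ σ s := fun s => le_min zero_le_one (le_max_left 0 s)
    have hσ1 : ∀ s, σ s ≤ 1 := fun s => min_le_left _ _
    refine ⟨fun s t => C₁ t + σ s • (C₁ 0 - C₁ t), ?_, ?_, ?_, ?_, ?_⟩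
    · apply Continuous.add
      · exact h₁.comp continuous_snd
      · exact (hσc.comp continuous_fst).smul
          (continuous_const.sub (h₁.comp continuous_snd))
    · intro t
      show C₁ t + σ 0 • (C₁ 0 - C₁ t) = C₁ t
      have h0 : σ 0 = 0 := by simp [hσ]
      rw [h0, zero_smul, add_zero]
    · intro s t
      simp only
      rw [hper₁ t]
    · intro s t hmem
      refine hz _ hmem ?_
      have heq : C₁ t + σ s • (C₁ 0 - C₁ t) = (1 - σ s) • C₁ t + σ s • C₁ 0 := by
        rw [smul_sub, sub_smul, one_smul]
        abel
      show C₁ t + σ s • (C₁ 0 - C₁ t) ∈ K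
      rw [hK, heq]
      exact (convex_convexHull ℝ _) (subset_convexHull ℝ _ (hrange t))
        (subset_convexHull ℝ _ (hrange 0))
        (by linarith [hσ1 s] : (0:ℝ) ≤ 1 - σ s) (hσ0 s) (by ring)
    · refine ⟨C₁ 0, fun t => ?_⟩
      show C₁ t + σ 1 • (C₁ 0 - C₁ t) = C₁ 0
      have h1' : σ 1 = 1 := by simp [hσ]
      rw [h1', one_smul]
      abel
end
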